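/- arXiv:2205.12250 — 10 statements merged into one kernel-verified Lean document; each statement's English description precedes it below -/
import Mathlib

section
/- Let n, d ≥ 1 and let f : (ℝ^d)^n → ℂ be a polynomial in the nd real coordinates of total degree at most n − 2. Then the antisymmetrization 𝒜f is identically zero. -/
open MeasureTheory Complex Matrix
open scoped BigOperators RealInnerProductSpace ENNReal NNReal

noncomputable section

abbrev Vec (d : ℕ) := EuclideanSpace ℝ (Fin d)
abbrev Conf (n d : ℕ) := Fin n → Vec d

/-- `w·x = Σᵢ ⟪wᵢ, xᵢ⟫`. -/
def dotConf {n d : ℕ} (w x : Conf n d) : ℝ := ∑ i, ⟪w i, x i⟫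

/-- Antisymmetrization `(𝒜f)(x) = (1/√(n!)) Σ_π sign(π) f(x∘π)`. -/
def antisym {n d : ℕ} (f : Conf n d → ℂ) : Conf n d → ℂ := fun x =>
  ((Real.sqrt (Nat.factorial n) : ℝ) : ℂ)⁻¹ *
    ∑ π : Equiv.Perm (Fin n), ((Equiv.Perm.sign π : ℤ) : ℂ) * f (fun i => x (π i))

/-- Product measure `ρₙ = ρ^{⊗n}`. -/
def prodMeasure {d : ℕ} (ρ : Measure (Vec d)) (n : ℕ) : Measure (Conf n d) :=
  Measure.pi fun _ => ρ

/-- `‖f‖_ρ² = ∫ |f|² dρₙ`. -/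
def normSq {n d : ℕ} (ρ : Measure (Vec d)) (f : Conf n d → ℂ) : ℝ :=
  ∫ x, ‖f x‖ ^ 2 ∂(prodMeasure ρ n)

/-- `ρ̂(v) = ∫ e^{-i v·x} dρ(x)`. -/
def ftMeasure {d : ℕ} (ρ : Measure (Vec d)) (v : Vec d) : ℂ :=
  ∫ x, Complex.exp (-(Complex.I * ((⟪v, x⟫ : ℝ) : ℂ))) ∂ρ

/-- Plane wave `e_u(x) = exp(i u·x)`. -/
def planeWave {n d : ℕ} (u : Conf n d) : Conf n d → ℂ := fun x =>
  Complex.exp (Complex.I * ((dotConf u x : ℝ) : ℂ))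

/-- `⟨f, g⟩_ρ = ∫ conj(f) g dρₙ`. -/
def innerProd {n d : ℕ} (ρ : Measure (Vec d)) (f g : Conf n d → ℂ) : ℂ :=
  ∫ x, (starRingEnd ℂ) (f x) * g x ∂(prodMeasure ρ n)

/-- Overlap kernel `D_w(θ,θ̃) = det(ρ̂(θwᵢ-θ̃wⱼ))`. -/
def Dker {n d : ℕ} (ρ : Measure (Vec d)) (w : Conf n d) (θ θ' : ℝ) : ℂ :=
  Matrix.det (Matrix.of fun i j : Fin n => ftMeasure ρ (θ • w i - θ' • w j))

/-- Gaussian overlap kernel `D^N_w(θ,θ̃) = det(exp(-‖θwᵢ-θ̃wⱼ‖²/2))`. -/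
def DN {n d : ℕ} (w : Conf n d) (θ θ' : ℝ) : ℝ :=
  Matrix.det (Matrix.of fun i j : Fin n => Real.exp (-‖θ • w i - θ' • w j‖ ^ 2 / 2))

/-- `δ_w = (1/2) min_{i<j} min_{±} ‖wᵢ ± wⱼ‖`. -/
def sep {n d : ℕ} (w : Conf n d) : ℝ :=
  (1 / 2) * ⨅ p : {p : Fin n × Fin n // p.1 < p.2},
    min ‖w p.1.1 + w p.1.2‖ ‖w p.1.1 - w p.1.2‖

/-- `G_ρ(t) = sup{|ρ̂(y)| : ‖y‖ ≥ t}`. -/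
def Gtail {d : ℕ} (ρ : Measure (Vec d)) (t : ℝ) : ℝ :=
  sSup {r | ∃ y : Vec d, t ≤ ‖y‖ ∧ r = ‖ftMeasure ρ y‖}

/-- `‖w‖ = (Σᵢ ‖wᵢ‖²)^{1/2}`. -/
def confNorm {n d : ℕ} (w : Conf n d) : ℝ := Real.sqrt (∑ i, ‖w i‖ ^ 2)

/-- `‖v‖_∞` : max of the `nd` scalar coordinates' absolute values. -/
def linf {n d : ℕ} (v : Conf n d) : ℝ := ⨆ i : Fin n, ⨆ j : Fin d, |v i j|

/-- Standard Gaussian measure `N(0, I_d)` on `ℝ^d`. -/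
def stdGaussian (d : ℕ) : Measure (Vec d) :=
  volume.withDensity fun x =>
    ENNReal.ofReal ((2 * Real.pi) ^ (-(d : ℝ) / 2) * Real.exp (-‖x‖ ^ 2 / 2))

lemma signed_sum_eval_zero (n d : ℕ) (x : Conf n d)
    (P : MvPolynomial (Fin n × Fin d) ℂ) (hdeg : P.totalDegree + 2 ≤ n) :
    ∑ π : Equiv.Perm (Fin n), ((Equiv.Perm.sign π : ℤ) : ℂ) *
      MvPolynomial.eval (fun p => ((x (π p.1) p.2 : ℝ) : ℂ)) P = 0 := by
  simp only [MvPolynomial.eval_eq, Finset.mul_sum]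
  rw [Finset.sum_comm]
  apply Finset.sum_eq_zero
  intro m hm
  have hmono : ∀ π : Equiv.Perm (Fin n),
      ((Equiv.Perm.sign π : ℤ) : ℂ) *
        (P.coeff m * ∏ p ∈ m.support, ((x (π p.1) p.2 : ℝ) : ℂ) ^ m p)
      = P.coeff m * (((Equiv.Perm.sign π : ℤ) : ℂ) *
        ∏ p ∈ m.support, ((x (π p.1) p.2 : ℝ) : ℂ) ^ m p) := by
    intro π; ring
  simp only [hmono, ← Finset.mul_sum]
  rw [mul_eq_zero]; right
  -- find two indices not used by the monomial
  set S : Finset (Fin n) := m.support.image Prod.fst with hS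
  have hcardS : S.card + 2 ≤ n := by
    have h1 : S.card ≤ m.support.card := Finset.card_image_le
    have h2 : m.support.card ≤ m.sum fun _ e => e := by
      have : m.support.card = ∑ p ∈ m.support, 1 := by simp
      rw [this, Finsupp.sum]
      exact Finset.sum_le_sum fun p hp =>
        Nat.one_le_iff_ne_zero.mpr (Finsupp.mem_support_iff.mp hp)
    have h3 : (m.sum fun _ e => e) ≤ P.totalDegree := MvPolynomial.le_totalDegree hm
    omega
  have hcompl : 1 < Sᶜ.card := by
    have := Finset.card_compl S
    simp only [Fintype.card_fin] at this
    omega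
  obtain ⟨a, ha, b, hb, hab⟩ := Finset.one_lt_card.mp hcompl
  simp only [Finset.mem_compl, hS, Finset.mem_image, not_exists] at ha hb
  set τ := Equiv.swap a b with hτ
  have hfix : ∀ p ∈ m.support, τ p.1 = p.1 := by
    intro p hp
    refine Equiv.swap_apply_of_ne_of_ne ?_ ?_
    · rintro rfl; exact ha p ⟨hp, rfl⟩
    · rintro rfl; exact hb p ⟨hp, rfl⟩
  set F : Equiv.Perm (Fin n) → ℂ := fun π =>
    ((Equiv.Perm.sign π : ℤ) : ℂ) * ∏ p ∈ m.support, ((x (π p.1) p.2 : ℝ) : ℂ) ^ m p with hF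
  have hFτ : ∀ π, F (π * τ) = - F π := by
    intro π
    have hsign : Equiv.Perm.sign (π * τ) = - Equiv.Perm.sign π := by
      rw [_root_.map_mul, Equiv.Perm.sign_swap hab]; exact mul_neg_one _
    have hprod : ∏ p ∈ m.support, ((x ((π * τ) p.1) p.2 : ℝ) : ℂ) ^ m p
        = ∏ p ∈ m.support, ((x (π p.1) p.2 : ℝ) : ℂ) ^ m p := by
      apply Finset.prod_congr rfl
      intro p hp
      simp [Equiv.Perm.mul_apply, hfix p hp]
    simp only [hF, hsign, hprod]
    push_cast
    ring
  have hsum : ∑ π : Equiv.Perm (Fin n), F π = ∑ π : Equiv.Perm (Fin n), F (π * τ) := by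
    exact (Fintype.sum_equiv (Equiv.mulRight τ) _ _ fun π => rfl).symm
  have : ∑ π : Equiv.Perm (Fin n), F π = - ∑ π : Equiv.Perm (Fin n), F π := by
    calc ∑ π : Equiv.Perm (Fin n), F π = ∑ π : Equiv.Perm (Fin n), F (π * τ) := hsum
      _ = ∑ π : Equiv.Perm (Fin n), -F π := Finset.sum_congr rfl fun π _ => hFτ π
      _ = -∑ π : Equiv.Perm (Fin n), F π := by simp
  have h2 : (2:ℂ) * ∑ π : Equiv.Perm (Fin n), F π = 0 := by linear_combination this
  exact (mul_eq_zero.mp h2).resolve_left two_ne_zero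

/-- the antisymmetrization of a polynomial of total degree ≤ n-2 vanishes. -/
theorem stmt1 (n d : ℕ) (hn : 1 ≤ n) (hd : 1 ≤ d)
    (f : Conf n d → ℂ) (P : MvPolynomial (Fin n × Fin d) ℂ)
    (hdeg : P.totalDegree + 2 ≤ n)
    (hf : ∀ x, f x = MvPolynomial.eval (fun p => ((x p.1 p.2 : ℝ) : ℂ)) P) :
    antisym f = 0 := by
  funext x
  simp only [antisym, Pi.zero_apply, hf]
  rw [signed_sum_eval_zero n d x P hdeg, mul_zero]

end
end

section
/- Let ρ be a probability measure on ℝ^d, n ≥ 1, and v, w ∈ (ℝ^d)^n. For u ∈ (ℝ^d)^n define the plane wave e_u : (ℝ^d)^n → ℂ by e_u(x) = exp(i u·x). Then ⟨𝒜e_v, 𝒜e_w⟩_ρ = det( (ρ̂(v_i − w_j))_{i,j=1}^n ). -/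
open MeasureTheory Complex Matrix
open scoped BigOperators RealInnerProductSpace ENNReal NNReal

noncomputable section

lemma norm_planeWave {n d : ℕ} (u : Conf n d) (x : Conf n d) : ‖planeWave u x‖ = 1 := by
  simp [planeWave, Complex.norm_exp]

lemma cont_pw {n d : ℕ} (u : Conf n d) (π : Equiv.Perm (Fin n)) :
    Continuous fun x : Conf n d => planeWave u (fun i => x (π i)) := by
  unfold planeWave dotConf
  exact Complex.continuous_exp.comp <| continuous_const.mul <|
    Complex.continuous_ofReal.comp <| continuous_finset_sum _ fun i _ =>
      (continuous_const.inner (continuous_apply (π i)))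

lemma pair_integrable (n d : ℕ) (ρ : Measure (Vec d)) [IsProbabilityMeasure ρ]
    (v w : Conf n d) (π σ : Equiv.Perm (Fin n)) :
    Integrable (fun x : Conf n d =>
      (starRingEnd ℂ) (planeWave v (fun i => x (π i))) * planeWave w (fun i => x (σ i)))
      (prodMeasure ρ n) := by
  haveI : IsProbabilityMeasure (prodMeasure ρ n) := by
    unfold prodMeasure; infer_instance
  have hc : Continuous fun x : Conf n d =>
      (starRingEnd ℂ) (planeWave v (fun i => x (π i))) * planeWave w (fun i => x (σ i)) :=
    (continuous_conj.comp (cont_pw v π)).mul (cont_pw w σ)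
  refine Integrable.mono' (integrable_const 1) hc.aestronglyMeasurable
    (Filter.Eventually.of_forall fun x => ?_)
  rw [norm_mul, RCLike.norm_conj, norm_planeWave, norm_planeWave, mul_one]

lemma pair_integral (n d : ℕ) (ρ : Measure (Vec d)) [IsProbabilityMeasure ρ]
    (v w : Conf n d) (π σ : Equiv.Perm (Fin n)) :
    ∫ x, (starRingEnd ℂ) (planeWave v (fun i => x (π i))) * planeWave w (fun i => x (σ i))
      ∂(prodMeasure ρ n)
    = ∏ i, ftMeasure ρ (v (π⁻¹ i) - w (σ⁻¹ i)) := by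
  letI : MeasureSpace (Vec d) := ⟨ρ⟩
  haveI : SigmaFinite (volume : Measure (Vec d)) := inferInstanceAs (SigmaFinite ρ)
  set F : (i : Fin n) → Vec d → ℂ := fun i y =>
    Complex.exp (Complex.I * (((⟪w (σ⁻¹ i), y⟫ - ⟪v (π⁻¹ i), y⟫ : ℝ)) : ℂ)) with hF
  have hx : ∀ x : Conf n d,
      (starRingEnd ℂ) (planeWave v (fun i => x (π i))) * planeWave w (fun i => x (σ i))
        = ∏ i, F i (x i) := by
    intro x
    have hr : dotConf v (fun i => x (π i)) = ∑ i, ⟪v (π⁻¹ i), x i⟫ :=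
      Fintype.sum_equiv π _ _ (fun i => by simp)
    have hs : dotConf w (fun i => x (σ i)) = ∑ i, ⟪w (σ⁻¹ i), x i⟫ :=
      Fintype.sum_equiv σ _ _ (fun i => by simp)
    unfold planeWave
    rw [← Complex.exp_conj, ← Complex.exp_add, hF]
    rw [← Complex.exp_sum]
    congr 1
    rw [hr, hs]
    simp only [_root_.map_mul, Complex.conj_I, Complex.conj_ofReal]
    push_cast
    rw [Finset.mul_sum]
    simp only [mul_sub]
    rw [Finset.sum_sub_distrib, Finset.mul_sum, sub_eq_add_neg, ← Finset.sum_neg_distrib, add_comm]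
    simp [neg_mul]
  have h1 : ∫ x, (starRingEnd ℂ) (planeWave v (fun i => x (π i))) * planeWave w (fun i => x (σ i))
      ∂(prodMeasure ρ n) = ∫ x : Conf n d, ∏ i, F i (x i) ∂(prodMeasure ρ n) :=
    integral_congr_ae (Filter.Eventually.of_forall hx)
  have h2 : ∫ x : Conf n d, ∏ i, F i (x i) = ∏ i, ∫ y, F i y :=
    integral_fintype_prod_eq_prod F
  have h3 : prodMeasure ρ n = (volume : Measure (Conf n d)) := rfl
  rw [h1, h3, h2]
  refine Finset.prod_congr rfl fun i _ => ?_
  unfold ftMeasure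
  refine integral_congr_ae (Filter.Eventually.of_forall fun y => ?_)
  simp only [hF]
  rw [show (-(Complex.I * ((⟪v (π⁻¹ i) - w (σ⁻¹ i), y⟫ : ℝ) : ℂ)))
      = Complex.I * (((⟪w (σ⁻¹ i), y⟫ - ⟪v (π⁻¹ i), y⟫ : ℝ) : ℂ) ) by
    rw [inner_sub_left]; push_cast; ring]


/-- overlap of antisymmetrized plane waves equals the determinant of the
overlap matrix. -/
theorem stmt2 (n d : ℕ) (hn : 1 ≤ n) (ρ : Measure (Vec d)) [IsProbabilityMeasure ρ]
    (v w : Conf n d) :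
    innerProd ρ (antisym (planeWave v)) (antisym (planeWave w))
      = Matrix.det (Matrix.of fun i j : Fin n => ftMeasure ρ (v i - w j)) := by
  classical
  set M : Matrix (Fin n) (Fin n) ℂ := Matrix.of fun i j : Fin n => ftMeasure ρ (v i - w j)
    with hM
  set s : Equiv.Perm (Fin n) → ℂ := fun π => ((Equiv.Perm.sign π : ℤ) : ℂ) with hsgn
  have hs_sq : ∀ π : Equiv.Perm (Fin n), s π * s π = 1 := by
    intro π
    rw [hsgn]
    rw [← Int.cast_mul, ← Units.val_mul, Int.units_mul_self]
    simp
  have hs_mul : ∀ π σ : Equiv.Perm (Fin n), s (π * σ) = s π * s σ := by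
    intro π σ
    simp [hsgn, ← Int.cast_mul]
  -- Step 1: integrand identity
  have hfac : ((Real.sqrt (Nat.factorial n) : ℝ) : ℂ)⁻¹
      * ((Real.sqrt (Nat.factorial n) : ℝ) : ℂ)⁻¹ = ((Nat.factorial n : ℝ) : ℂ)⁻¹ := by
    rw [← mul_inv, ← Complex.ofReal_mul, Real.mul_self_sqrt (Nat.cast_nonneg _)]
  have hconj : ∀ x : Conf n d,
      (starRingEnd ℂ) (antisym (planeWave v) x) * antisym (planeWave w) x
      = ((Nat.factorial n : ℝ) : ℂ)⁻¹ * ∑ π : Equiv.Perm (Fin n), ∑ σ : Equiv.Perm (Fin n),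
          (s π * s σ) *
          ((starRingEnd ℂ) (planeWave v fun i => x (π i)) * planeWave w fun i => x (σ i)) := by
    intro x
    unfold antisym
    rw [_root_.map_mul, map_inv₀, Complex.conj_ofReal, map_sum]
    simp only [_root_.map_mul, map_intCast]
    rw [show ((Real.sqrt (Nat.factorial n) : ℝ) : ℂ)⁻¹
        * (∑ π : Equiv.Perm (Fin n), ((Equiv.Perm.sign π : ℤ) : ℂ)
            * (starRingEnd ℂ) (planeWave v fun i => x (π i)))
        * (((Real.sqrt (Nat.factorial n) : ℝ) : ℂ)⁻¹
          * ∑ σ : Equiv.Perm (Fin n), ((Equiv.Perm.sign σ : ℤ) : ℂ)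
            * planeWave w fun i => x (σ i))
      = (((Real.sqrt (Nat.factorial n) : ℝ) : ℂ)⁻¹ * ((Real.sqrt (Nat.factorial n) : ℝ) : ℂ)⁻¹)
        * ((∑ π : Equiv.Perm (Fin n), ((Equiv.Perm.sign π : ℤ) : ℂ)
            * (starRingEnd ℂ) (planeWave v fun i => x (π i)))
          * ∑ σ : Equiv.Perm (Fin n), ((Equiv.Perm.sign σ : ℤ) : ℂ)
            * planeWave w fun i => x (σ i)) from by ring]
    rw [hfac, Finset.sum_mul_sum]
    congr 1
    refine Finset.sum_congr rfl fun π _ => ?_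
    refine Finset.sum_congr rfl fun σ _ => ?_
    rw [hsgn]
    ring
  -- Step 2: compute the integral
  unfold innerProd
  rw [integral_congr_ae (Filter.Eventually.of_forall hconj), integral_const_mul,
    integral_finset_sum _ (fun π _ => integrable_finset_sum _
      (fun σ _ => ((pair_integrable n d ρ v w π σ).const_mul _)))]
  have hsum : ∀ π : Equiv.Perm (Fin n),
      (∫ x, ∑ σ : Equiv.Perm (Fin n), (s π * s σ) *
        ((starRingEnd ℂ) (planeWave v fun i => x (π i)) * planeWave w fun i => x (σ i))
        ∂(prodMeasure ρ n))
      = ∑ σ : Equiv.Perm (Fin n), (s π * s σ) * ∏ i, ftMeasure ρ (v (π⁻¹ i) - w (σ⁻¹ i)) := by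
    intro π
    rw [integral_finset_sum _ (fun σ _ => ((pair_integrable n d ρ v w π σ).const_mul _))]
    refine Finset.sum_congr rfl fun σ _ => ?_
    rw [integral_const_mul, pair_integral n d ρ v w π σ]
  rw [Finset.sum_congr rfl fun π _ => hsum π]
  -- Step 3: algebra
  have hMentry : ∀ i j : Fin n, ftMeasure ρ (v i - w j) = M i j := fun i j => rfl
  have hdet : (∑ σ : Equiv.Perm (Fin n), s σ * ∏ i, M i (σ⁻¹ i)) = M.det := by
    rw [← Matrix.det_transpose M, Matrix.det_apply']
    refine Fintype.sum_equiv (Equiv.inv (Equiv.Perm (Fin n))) _ _ fun σ => ?_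
    simp [hsgn, Equiv.Perm.sign_inv]
  have hinner : ∀ π : Equiv.Perm (Fin n),
      (∑ σ : Equiv.Perm (Fin n), (s π * s σ) * ∏ i, ftMeasure ρ (v (π⁻¹ i) - w (σ⁻¹ i)))
        = M.det := by
    intro π
    rw [← hdet]
    refine (Fintype.sum_equiv (Equiv.mulLeft π) _ _ fun σ => ?_).symm
    simp only [Equiv.coe_mulLeft]
    rw [hs_mul, show s π * (s π * s σ) = (s π * s π) * s σ from by ring, hs_sq, one_mul]
    congr 1
    refine Fintype.prod_equiv π _ _ fun i => ?_
    simp [hM, _root_.mul_inv_rev, Equiv.Perm.coe_mul]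
  rw [Finset.sum_congr rfl fun π _ => hinner π, Finset.sum_const, Finset.card_univ,
    Fintype.card_perm, Fintype.card_fin, nsmul_eq_mul]
  rw [show (((Nat.factorial n : ℝ)) : ℂ)⁻¹ * ((Nat.factorial n : ℂ) * M.det)
      = (((Nat.factorial n : ℂ))⁻¹ * (Nat.factorial n : ℂ)) * M.det from by push_cast; ring]
  rw [inv_mul_cancel₀ (by exact_mod_cast Nat.factorial_ne_zero n), one_mul]

end
end

section
/- Let ρ be a probability measure on ℝ^d, n ≥ 2, and w ∈ (ℝ^d)^n. Then for all θ, θ̃ ∈ ℝ, | D_w(θ, θ̃) − Π_{i=1}^n ρ̂((θ − θ̃) w_i) | ≤ n! · G_ρ( δ_w · max(|θ|, |θ̃|) ). -/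
open MeasureTheory Complex Matrix
open scoped BigOperators RealInnerProductSpace ENNReal NNReal

noncomputable section

lemma abs_ft_le_one {d : ℕ} (ρ : Measure (Vec d)) [IsProbabilityMeasure ρ] (v : Vec d) :
    ‖ftMeasure ρ v‖ ≤ 1 := by
  rw [ftMeasure]
  have h := norm_integral_le_of_norm_le_const (μ := ρ) (C := 1)
    (f := fun x => Complex.exp (-(Complex.I * ((⟪v, x⟫ : ℝ) : ℂ))))
    (Filter.Eventually.of_forall fun x => by
      rw [Complex.norm_exp]; simp)
  simpa using h

lemma key_pair_aux {d : ℕ} (a b : Vec d) (t : ℝ) (ht : |t| ≤ 1) (hba : ‖b‖ ≤ ‖a‖)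
    (hc : 0 ≤ (⟪a,b⟫ : ℝ)) : ‖a - b‖ ≤ 2 * ‖a - t • b‖ := by
  have ht1 : -1 ≤ t := neg_le_of_abs_le ht
  have ht2 : t ≤ 1 := le_of_abs_le ht
  have hb : (0:ℝ) ≤ ‖b‖ := norm_nonneg b
  have ha : (0:ℝ) ≤ ‖a‖ := norm_nonneg a
  have h2 : ‖a - b‖ ^ 2 = ‖a‖^2 - 2 * ⟪a,b⟫ + ‖b‖^2 := norm_sub_sq_real a b
  have h3 : ‖a - t • b‖ ^ 2 = ‖a‖^2 - 2 * (t * ⟪a,b⟫) + t^2 * ‖b‖^2 := by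
    rw [norm_sub_sq_real, real_inner_smul_right, norm_smul, Real.norm_eq_abs,
      mul_pow, _root_.sq_abs]
  have hcs : |(⟪a,b⟫:ℝ)| ≤ ‖a‖ * ‖b‖ := abs_real_inner_le_norm a b
  have hR : (0:ℝ) ≤ ‖a - t • b‖ := norm_nonneg _
  have key : ‖a - b‖^2 ≤ (2 * ‖a - t • b‖)^2 := by
    have hcab : (⟪a,b⟫:ℝ) ≤ ‖a‖*‖b‖ := (abs_le.mp hcs).2
    rcases le_or_gt (⟪a,b⟫:ℝ) (‖b‖^2) with h | h
    · nlinarith [mul_nonneg hc (sq_nonneg (t-1)), mul_nonneg (sub_nonneg.2 h) (sq_nonneg t),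
        sq_nonneg (‖a‖ - ‖b‖), mul_nonneg hb ha]
    · nlinarith [mul_nonneg (sub_nonneg.2 ht2)
        (show (0:ℝ) ≤ 2*⟪a,b⟫ - ‖b‖^2*(1+t) by nlinarith),
        sq_nonneg (‖a‖-‖b‖), mul_nonneg hb ha]
  nlinarith [norm_nonneg (a-b)]

lemma key_pair {d : ℕ} (a b : Vec d) (t : ℝ) (ht : |t| ≤ 1) (hba : ‖b‖ ≤ ‖a‖) :
    min ‖a + b‖ ‖a - b‖ ≤ 2 * ‖a - t • b‖ := by
  rcases le_or_gt 0 (⟪a,b⟫ : ℝ) with hc | hc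
  · exact le_trans (min_le_right _ _) (key_pair_aux a b t ht hba hc)
  · have hc' : 0 ≤ (⟪a, -b⟫ : ℝ) := by rw [inner_neg_right]; linarith
    have h := key_pair_aux a (-b) (-t) (by rwa [abs_neg]) (by rwa [norm_neg]) hc'
    rw [sub_neg_eq_add] at h
    rw [show (-t) • (-b : Vec d) = t • b by simp] at h
    exact le_trans (min_le_left _ _) h

lemma sep_le {n d : ℕ} (w : Conf n d) (i j : Fin n) (hij : i ≠ j) :
    sep w ≤ (1/2) * min ‖w i + w j‖ ‖w i - w j‖ := by
  have hbdd : BddBelow (Set.range fun p : {p : Fin n × Fin n // p.1 < p.2} =>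
      min ‖w p.1.1 + w p.1.2‖ ‖w p.1.1 - w p.1.2‖) := (Set.finite_range _).bddBelow
  rcases lt_or_gt_of_ne hij with h | h
  · have := ciInf_le hbdd (⟨(i, j), h⟩ : {p : Fin n × Fin n // p.1 < p.2})
    rw [sep]; linarith
  · have := ciInf_le hbdd (⟨(j, i), h⟩ : {p : Fin n × Fin n // p.1 < p.2})
    simp only at this
    rw [show ‖w j + w i‖ = ‖w i + w j‖ by rw [add_comm], norm_sub_rev] at this
    rw [sep]; linarith

lemma keyL {n d : ℕ} (w : Conf n d) (i j : Fin n) (hij : i ≠ j) (θ θ' : ℝ)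
    (hθ : |θ'| ≤ |θ|) (hw : ‖w j‖ ≤ ‖w i‖) :
    sep w * max |θ| |θ'| ≤ ‖θ • w i - θ' • w j‖ := by
  rcases eq_or_ne θ 0 with rfl | hθ0
  · have : θ' = 0 := by simpa [abs_nonpos_iff] using hθ
    subst this; simp
  · have hθpos : 0 < |θ| := abs_pos.2 hθ0
    set t := θ' / θ with hts
    have ht : |t| ≤ 1 := by
      rw [hts, abs_div, div_le_one hθpos]; exact hθ
    have hrw : θ • w i - θ' • w j = θ • (w i - t • w j) := by
      rw [smul_sub, smul_smul, hts, mul_div_cancel₀ _ hθ0]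
    rw [hrw, norm_smul, Real.norm_eq_abs, max_eq_left hθ]
    have h1 : sep w ≤ ‖w i - t • w j‖ := by
      have h2 := key_pair (w i) (w j) t ht hw
      have h3 := sep_le w i j hij
      linarith
    calc sep w * |θ| ≤ ‖w i - t • w j‖ * |θ| :=
          mul_le_mul_of_nonneg_right h1 (abs_nonneg θ)
      _ = |θ| * ‖w i - t • w j‖ := mul_comm _ _

lemma keyR {n d : ℕ} (w : Conf n d) (i j : Fin n) (hij : i ≠ j) (θ θ' : ℝ)
    (hθ : |θ| ≤ |θ'|) (hw : ‖w i‖ ≤ ‖w j‖) :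
    sep w * max |θ| |θ'| ≤ ‖θ • w i - θ' • w j‖ := by
  rw [norm_sub_rev, max_comm]
  exact keyL w j i hij.symm θ' θ hθ hw
/-- the overlap kernel is close to the product `Π ρ̂((θ-θ̃)wᵢ)`, up to
`n!·G_ρ(δ_w·max(|θ|,|θ̃|))`. -/
theorem stmt5 (n d : ℕ) (hn : 2 ≤ n) (ρ : Measure (Vec d)) [IsProbabilityMeasure ρ]
    (w : Conf n d) (θ θ' : ℝ) :
    ‖Dker ρ w θ θ' - ∏ i : Fin n, ftMeasure ρ ((θ - θ') • w i)‖
      ≤ (Nat.factorial n : ℝ) * Gtail ρ (sep w * max |θ| |θ'|) := by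
  classical
  set T : ℝ := sep w * max |θ| |θ'| with hT
  set G : ℝ := Gtail ρ T with hGdef
  have hG0 : 0 ≤ G := Real.sSup_nonneg (by rintro r ⟨y, -, rfl⟩; exact norm_nonneg _)
  have hbdd : BddAbove {r | ∃ y : Vec d, T ≤ ‖y‖ ∧ r = ‖ftMeasure ρ y‖} :=
    ⟨1, by rintro r ⟨y, -, rfl⟩; exact abs_ft_le_one ρ y⟩
  have hle_G : ∀ y : Vec d, T ≤ ‖y‖ → ‖ftMeasure ρ y‖ ≤ G :=
    fun y hy => le_csSup hbdd ⟨y, hy, rfl⟩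
  have hsplit : Dker ρ w θ θ' - ∏ i : Fin n, ftMeasure ρ ((θ - θ') • w i)
      = ∑ σ ∈ Finset.univ.erase (1 : Equiv.Perm (Fin n)),
          ((Equiv.Perm.sign σ : ℤ) : ℂ) * ∏ i : Fin n, ftMeasure ρ (θ • w (σ i) - θ' • w i) := by
    rw [Dker, Matrix.det_apply',
      ← Finset.sum_erase_add _ _ (Finset.mem_univ (1 : Equiv.Perm (Fin n)))]
    have h1 : ∏ i : Fin n, ftMeasure ρ ((θ - θ') • w i)
        = ((Equiv.Perm.sign (1 : Equiv.Perm (Fin n)) : ℤ) : ℂ) *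
          ∏ i : Fin n, (Matrix.of fun i j : Fin n => ftMeasure ρ (θ • w i - θ' • w j))
            ((1 : Equiv.Perm (Fin n)) i) i := by
      simp [sub_smul]
    rw [h1]
    simp only [Matrix.of_apply, Equiv.Perm.one_apply]
    ring
  rw [hsplit]
  have habs : ‖∑ σ ∈ Finset.univ.erase (1 : Equiv.Perm (Fin n)),
      ((Equiv.Perm.sign σ : ℤ) : ℂ) * ∏ i : Fin n, ftMeasure ρ (θ • w (σ i) - θ' • w i)‖
      ≤ ∑ σ ∈ Finset.univ.erase (1 : Equiv.Perm (Fin n)),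
        ‖((Equiv.Perm.sign σ : ℤ) : ℂ) *
          ∏ i : Fin n, ftMeasure ρ (θ • w (σ i) - θ' • w i)‖ :=
    norm_sum_le _ _
  have hterm : ∀ σ ∈ Finset.univ.erase (1 : Equiv.Perm (Fin n)),
      ‖((Equiv.Perm.sign σ : ℤ) : ℂ) *
        ∏ i : Fin n, ftMeasure ρ (θ • w (σ i) - θ' • w i)‖ ≤ G := by
    intro σ hσ
    have hσ1 : σ ≠ 1 := (Finset.mem_erase.mp hσ).1
    have hsign : ‖((Equiv.Perm.sign σ : ℤ) : ℂ)‖ = 1 := by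
      rcases Int.units_eq_one_or (Equiv.Perm.sign σ) with h | h <;> simp [h]
    rw [norm_mul, hsign, one_mul, norm_prod]
    -- find a good index
    set S : Finset (Fin n) := Finset.univ.filter (fun i => σ i ≠ i) with hS
    have hSne : S.Nonempty := by
      have : ∃ i, σ i ≠ i := by
        by_contra h; push_neg at h
        exact hσ1 (Equiv.ext h)
      obtain ⟨i, hi⟩ := this
      exact ⟨i, by simp [hS, hi]⟩
    obtain ⟨a, haS, hamax⟩ := Finset.exists_max_image S (fun i => ‖w i‖) hSne
    have haσ : σ a ≠ a := (Finset.mem_filter.mp haS).2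
    have hfct : ∃ i₀ : Fin n,
        ‖ftMeasure ρ (θ • w (σ i₀) - θ' • w i₀)‖ ≤ G := by
      rcases le_total |θ'| |θ| with hθc | hθc
      · refine ⟨σ⁻¹ a, ?_⟩
        have h1 : σ (σ⁻¹ a) = a := Equiv.Perm.mul_apply σ σ⁻¹ a ▸ by simp
        have hne : a ≠ σ⁻¹ a := fun h => haσ (by
          conv_lhs => rw [h]
          rw [h1])
        have hmem : σ⁻¹ a ∈ S := by
          simp only [hS, Finset.mem_filter, Finset.mem_univ, true_and]
          rw [h1]; exact hne
        have hwle : ‖w (σ⁻¹ a)‖ ≤ ‖w a‖ := hamax _ hmem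
        have hb := keyL w a (σ⁻¹ a) hne θ θ' hθc hwle
        rw [h1]
        exact hle_G _ hb
      · refine ⟨a, ?_⟩
        have hb := keyR w (σ a) a haσ θ θ' hθc (by
          have hmem : σ a ∈ S := by
            simp only [hS, Finset.mem_filter, Finset.mem_univ, true_and]
            exact fun h => haσ (σ.injective h)
          exact hamax _ hmem)
        exact hle_G _ hb
    obtain ⟨i₀, hi₀⟩ := hfct
    calc ∏ i : Fin n, ‖ftMeasure ρ (θ • w (σ i) - θ' • w i)‖
        = ‖ftMeasure ρ (θ • w (σ i₀) - θ' • w i₀)‖ *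
          ∏ i ∈ Finset.univ.erase i₀, ‖ftMeasure ρ (θ • w (σ i) - θ' • w i)‖ :=
          (Finset.mul_prod_erase _ _ (Finset.mem_univ i₀)).symm
      _ ≤ G * 1 := by
          refine mul_le_mul hi₀ (Finset.prod_le_one (fun i _ => norm_nonneg _)
            (fun i _ => abs_ft_le_one ρ _)) (Finset.prod_nonneg fun i _ =>
            norm_nonneg _) hG0
      _ = G := mul_one G
  calc ‖∑ σ ∈ Finset.univ.erase (1 : Equiv.Perm (Fin n)),
        ((Equiv.Perm.sign σ : ℤ) : ℂ) * ∏ i : Fin n, ftMeasure ρ (θ • w (σ i) - θ' • w i)‖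
      ≤ ∑ σ ∈ Finset.univ.erase (1 : Equiv.Perm (Fin n)),
        ‖((Equiv.Perm.sign σ : ℤ) : ℂ) *
          ∏ i : Fin n, ftMeasure ρ (θ • w (σ i) - θ' • w i)‖ := habs
    _ ≤ ∑ _σ ∈ Finset.univ.erase (1 : Equiv.Perm (Fin n)), G := Finset.sum_le_sum hterm
    _ = ((Finset.univ.erase (1 : Equiv.Perm (Fin n))).card : ℝ) * G := by
        rw [Finset.sum_const, nsmul_eq_mul]
    _ ≤ (Nat.factorial n : ℝ) * G := by
        refine mul_le_mul_of_nonneg_right ?_ hG0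
        have : (Finset.univ.erase (1 : Equiv.Perm (Fin n))).card ≤ Nat.factorial n := by
          calc (Finset.univ.erase (1 : Equiv.Perm (Fin n))).card
              ≤ (Finset.univ : Finset (Equiv.Perm (Fin n))).card := Finset.card_erase_le
            _ = Nat.factorial n := by simp [Fintype.card_perm]
        exact_mod_cast this

end
end

section
/- Let n ≥ 2, d ≥ 1, and w ∈ (ℝ^d)^n. Then for every real number θ̃ and every permutation π of {1,…,n} with π ≠ identity, one has max_{1 ≤ i ≤ n} ‖w_i − θ̃ · w_{π(i)}‖ ≥ δ_w. -/
open MeasureTheory Complex Matrix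
open scoped BigOperators RealInnerProductSpace ENNReal NNReal

noncomputable section

lemma sep_le_pair {n d : ℕ} (w : Conf n d) {i j : Fin n} (hij : i < j) :
    sep w ≤ (1 / 2) * min ‖w i + w j‖ ‖w i - w j‖ := by
  have hbdd : BddBelow (Set.range fun p : {p : Fin n × Fin n // p.1 < p.2} =>
      min ‖w p.1.1 + w p.1.2‖ ‖w p.1.1 - w p.1.2‖) := by
    refine ⟨0, ?_⟩
    rintro x ⟨p, rfl⟩
    exact le_min (norm_nonneg _) (norm_nonneg _)
  have h := ciInf_le hbdd (⟨(i, j), hij⟩ : {p : Fin n × Fin n // p.1 < p.2})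
  unfold sep
  nlinarith [h]

lemma sep_le_pair' {n d : ℕ} (w : Conf n d) {i j : Fin n} (hij : i ≠ j) :
    sep w ≤ (1 / 2) * min ‖w i + w j‖ ‖w i - w j‖ := by
  rcases lt_or_gt_of_ne hij with h | h
  · exact sep_le_pair w h
  · have := sep_le_pair w h
    rwa [add_comm (w j) (w i), norm_sub_rev (w j) (w i)] at this

lemma key {n d : ℕ} (w : Conf n d) {i j : Fin n} (hij : i ≠ j)
    (hle : ‖w j‖ ≤ ‖w i‖) {s : ℝ} (hs : |s| ≤ 1) :
    sep w ≤ ‖w i - s • w j‖ := by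
  set σ : ℝ := if 0 ≤ s then 1 else -1 with hσdef
  have hσ : 2 * sep w ≤ ‖w i - σ • w j‖ := by
    have h := sep_le_pair' w hij
    by_cases h0 : 0 ≤ s
    · simp only [hσdef, if_pos h0, one_smul]
      have := min_le_right ‖w i + w j‖ ‖w i - w j‖
      linarith
    · simp only [hσdef, if_neg h0, neg_smul, one_smul, sub_neg_eq_add]
      have := min_le_left ‖w i + w j‖ ‖w i - w j‖
      linarith
  have htri : ‖w i - σ • w j‖ ≤ ‖w i - s • w j‖ + |s - σ| * ‖w j‖ := by
    have : w i - σ • w j = (w i - s • w j) + (s - σ) • w j := by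
      rw [sub_smul]; abel
    rw [this]
    calc ‖(w i - s • w j) + (s - σ) • w j‖
        ≤ ‖w i - s • w j‖ + ‖(s - σ) • w j‖ := norm_add_le _ _
      _ = ‖w i - s • w j‖ + |s - σ| * ‖w j‖ := by rw [norm_smul, Real.norm_eq_abs]
  have hsσ : |s - σ| = 1 - |s| := by
    rcases abs_le.mp hs with ⟨h1, h2⟩
    by_cases h0 : 0 ≤ s
    · simp only [hσdef, if_pos h0]
      rw [_root_.abs_of_nonpos (by linarith), _root_.abs_of_nonneg h0]; ring
    · simp only [hσdef, if_neg h0]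
      rw [_root_.abs_of_nonneg (by linarith), _root_.abs_of_neg (lt_of_not_ge h0)]; ring
  have hlow : ‖w i‖ - |s| * ‖w j‖ ≤ ‖w i - s • w j‖ := by
    have := norm_sub_norm_le (w i) (s • w j)
    rw [norm_smul, Real.norm_eq_abs] at this
    linarith
  have hjnn : (0 : ℝ) ≤ ‖w j‖ := norm_nonneg _
  nlinarith [hσ, htri, hsσ, hlow]

/-- for every `θ̃` and every nontrivial permutation `π`,
`max_i ‖wᵢ - θ̃·w_{π(i)}‖ ≥ δ_w`. -/
theorem stmt6 (n d : ℕ) (hn : 2 ≤ n) (hd : 1 ≤ d) (w : Conf n d)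
    (θ' : ℝ) (π : Equiv.Perm (Fin n)) (hπ : π ≠ 1) :
    sep w ≤ ⨆ i : Fin n, ‖w i - θ' • w (π i)‖ := by
  classical
  -- the set of non-fixed points
  set S : Finset (Fin n) := Finset.univ.filter (fun i => π i ≠ i) with hS
  have hSne : S.Nonempty := by
    by_contra h
    apply hπ
    apply Equiv.ext
    intro i
    simp only [Equiv.Perm.one_apply]
    by_contra hne
    exact h ⟨i, by simp [hS, hne]⟩
  obtain ⟨i, hiS, himax⟩ := S.exists_max_image (fun i => ‖w i‖) hSne
  have hi : π i ≠ i := by simpa [hS] using hiS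
  have hbdd : BddAbove (Set.range fun i : Fin n => ‖w i - θ' • w (π i)‖) :=
    (Set.finite_range _).bddAbove
  by_cases hθ : |θ'| ≤ 1
  · -- use index i, j = π i
    have hjS : π i ∈ S := by
      simp only [hS, Finset.mem_filter, Finset.mem_univ, true_and]
      intro h
      exact hi (π.injective h)
    have hle : ‖w (π i)‖ ≤ ‖w i‖ := himax _ hjS
    have h1 : sep w ≤ ‖w i - θ' • w (π i)‖ := key w (Ne.symm hi) hle hθ
    exact h1.trans (le_ciSup hbdd i)
  · -- |θ'| > 1 : use index k = π⁻¹ i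
    push_neg at hθ
    have hθ0 : θ' ≠ 0 := by
      intro h; rw [h] at hθ; simp at hθ; linarith
    set k := π⁻¹ i with hk
    have hπk : π k = i := Equiv.apply_symm_apply π i
    have hki : k ≠ i := by
      intro h
      rw [h] at hπk
      exact hi hπk
    have hkS : k ∈ S := by
      simp only [hS, Finset.mem_filter, Finset.mem_univ, true_and]
      rw [hπk]
      exact Ne.symm hki
    have hle : ‖w k‖ ≤ ‖w i‖ := himax _ hkS
    have hs : |θ'⁻¹| ≤ 1 := by
      rw [abs_inv]
      rw [inv_le_one_iff₀]
      right; linarith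
    have h1 : sep w ≤ ‖w i - θ'⁻¹ • w k‖ := key w (Ne.symm hki) hle hs
    have h2 : ‖w k - θ' • w (π k)‖ = |θ'| * ‖w i - θ'⁻¹ • w k‖ := by
      rw [hπk]
      have : w k - θ' • w i = θ' • (θ'⁻¹ • w k - w i) := by
        rw [smul_sub, smul_smul, mul_inv_cancel₀ hθ0, one_smul]
      rw [this, norm_smul, Real.norm_eq_abs, norm_sub_rev]
    have h3 : sep w ≤ ‖w k - θ' • w (π k)‖ := by
      rw [h2]
      calc sep w ≤ ‖w i - θ'⁻¹ • w k‖ := h1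
        _ = 1 * ‖w i - θ'⁻¹ • w k‖ := (one_mul _).symm
        _ ≤ |θ'| * ‖w i - θ'⁻¹ • w k‖ :=
            mul_le_mul_of_nonneg_right (le_of_lt hθ) (norm_nonneg _)
    exact h3.trans (le_ciSup hbdd k)

end
end

section
/- Let n, d ≥ 1, w ∈ (ℝ^d)^n, and θ, θ̃ ∈ ℝ with θ·θ̃ ≠ 0, and let s ∈ {+1, −1} be the sign of θ·θ̃. Then D^N_w(θ, θ̃) = exp(−(‖w‖²/2)(|θ| − |θ̃|)²) · D^N_w( √(|θ θ̃|), s·√(|θ θ̃|) ). -/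
open MeasureTheory Complex Matrix
open scoped BigOperators RealInnerProductSpace ENNReal NNReal

noncomputable section

/-- the Gaussian overlap kernel is determined by its values on the
diagonal and anti-diagonal via a Gaussian factor. -/
theorem stmt10 (n d : ℕ) (hn : 1 ≤ n) (hd : 1 ≤ d) (w : Conf n d)
    (θ θ' : ℝ) (hθ : θ * θ' ≠ 0) (s : ℝ) (hs : s = Real.sign (θ * θ')) :
    DN w θ θ' = Real.exp (-(confNorm w ^ 2 / 2) * (|θ| - |θ'|) ^ 2) *
      DN w (Real.sqrt |θ * θ'|) (s * Real.sqrt |θ * θ'|) := by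
  set a := Real.sqrt |θ * θ'| with ha
  have ha2 : a ^ 2 = |θ * θ'| := Real.sq_sqrt (abs_nonneg _)
  have hsa : s * |θ * θ'| = θ * θ' := by
    rcases hθ.lt_or_gt with h | h
    · rw [hs, Real.sign_of_neg h, abs_of_neg h]; ring
    · rw [hs, Real.sign_of_pos h, abs_of_pos h]; ring
  have hs2 : s ^ 2 = 1 := by
    rcases hθ.lt_or_gt with h | h
    · rw [hs, Real.sign_of_neg h]; norm_num
    · rw [hs, Real.sign_of_pos h]; norm_num
  have key : ∀ x y : Vec d, ‖θ • x - θ' • y‖ ^ 2 =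
      (θ ^ 2 - |θ * θ'|) * ‖x‖ ^ 2 + (θ' ^ 2 - |θ * θ'|) * ‖y‖ ^ 2 +
        ‖a • x - (s * a) • y‖ ^ 2 := by
    intro x y
    have h1 : ‖θ • x - θ' • y‖ ^ 2
        = θ ^ 2 * ‖x‖ ^ 2 - 2 * (θ * θ') * ⟪x, y⟫ + θ' ^ 2 * ‖y‖ ^ 2 := by
      rw [@norm_sub_sq_real]
      simp only [norm_smul, real_inner_smul_left, real_inner_smul_right, mul_pow]
      have hn1 : ‖θ‖ ^ 2 = θ ^ 2 := by rw [Real.norm_eq_abs, _root_.sq_abs]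
      have hn2 : ‖θ'‖ ^ 2 = θ' ^ 2 := by rw [Real.norm_eq_abs, _root_.sq_abs]
      linear_combination ‖x‖ ^ 2 * hn1 + ‖y‖ ^ 2 * hn2
    have h2 : ‖a • x - (s * a) • y‖ ^ 2
        = |θ * θ'| * ‖x‖ ^ 2 - 2 * (θ * θ') * ⟪x, y⟫ + |θ * θ'| * ‖y‖ ^ 2 := by
      rw [@norm_sub_sq_real]
      simp only [norm_smul, real_inner_smul_left, real_inner_smul_right, mul_pow]
      have h7 : s * a * a = θ * θ' := by rw [mul_assoc, ← pow_two, ha2, hsa]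
      have h3 : (s * a) ^ 2 = |θ * θ'| := by rw [mul_pow, hs2, one_mul, ha2]
      have h4 : ‖a‖ ^ 2 = |θ * θ'| := by rw [Real.norm_eq_abs, _root_.sq_abs, ha2]
      have h5 : ‖s * a‖ ^ 2 = |θ * θ'| := by rw [Real.norm_eq_abs, _root_.sq_abs, h3]
      linear_combination ‖x‖ ^ 2 * h4 + ‖y‖ ^ 2 * h5 - 2 * (inner ℝ x y : ℝ) * h7
    linarith
  have hmat : (Matrix.of fun i j : Fin n => Real.exp (-‖θ • w i - θ' • w j‖ ^ 2 / 2))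
      = Matrix.of fun i j : Fin n =>
          (fun i => Real.exp (-((θ ^ 2 - |θ * θ'|) * ‖w i‖ ^ 2) / 2)) i *
          (Matrix.of fun i j : Fin n =>
            (fun j => Real.exp (-((θ' ^ 2 - |θ * θ'|) * ‖w j‖ ^ 2) / 2)) j *
            Real.exp (-‖a • w i - (s * a) • w j‖ ^ 2 / 2)) i j := by
    ext i j
    simp only [Matrix.of_apply]
    rw [← Real.exp_add, ← Real.exp_add, key (w i) (w j)]
    ring_nf
  rw [DN, DN, hmat, Matrix.det_mul_column]
  erw [Matrix.det_mul_row _ (Matrix.of fun i j : Fin n => Real.exp (-‖a • w i - (s * a) • w j‖ ^ 2 / 2))]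
  rw [← mul_assoc]
  congr 1
  rw [← Real.exp_sum, ← Real.exp_sum, ← Real.exp_add]
  congr 1
  rw [← Finset.sum_add_distrib]
  have hcn : confNorm w ^ 2 = ∑ i, ‖w i‖ ^ 2 :=
    Real.sq_sqrt (Finset.sum_nonneg fun i _ => sq_nonneg _)
  have habs : |θ * θ'| = |θ| * |θ'| := abs_mul _ _
  rw [show -(confNorm w ^ 2 / 2) * (|θ| - |θ'|) ^ 2
      = (∑ i, ‖w i‖ ^ 2) * (-(1 / 2) * (|θ| - |θ'|) ^ 2) by rw [hcn]; ring,
    Finset.sum_mul]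
  refine Finset.sum_congr rfl fun i _ => ?_
  have h6 : (|θ| - |θ'|) ^ 2 = θ ^ 2 - 2 * |θ * θ'| + θ' ^ 2 := by
    rw [habs, sub_sq, _root_.sq_abs, _root_.sq_abs]; ring
  rw [h6]; ring

end
end

section
/- Let n, d ≥ 1 and w ∈ (ℝ^d)^n. Then for all θ, θ̃ ∈ ℝ, |D^N_w(θ, θ̃)| ≤ exp(−(‖w‖²/2)(|θ| − |θ̃|)²). -/
open MeasureTheory Complex Matrix
open scoped BigOperators RealInnerProductSpace ENNReal NNReal

noncomputable section

namespace Stmt11Aux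

variable {m : ℕ}

lemma quad_eq (M : Matrix (Fin m) (Fin m) ℝ) (x : Fin m → ℝ) :
    dotProduct (star x) (M *ᵥ x) = ∑ i, ∑ j, x i * x j * M i j := by
  simp only [dotProduct, mulVec, Pi.star_apply, star_trivial, Finset.mul_sum]
  refine Finset.sum_congr rfl fun i _ => Finset.sum_congr rfl fun j _ => by ring

lemma posSemidef_of (M : Matrix (Fin m) (Fin m) ℝ)
    (hsym : ∀ i j, M i j = M j i)
    (h : ∀ x : Fin m → ℝ, 0 ≤ ∑ i, ∑ j, x i * x j * M i j) : M.PosSemidef := by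
  refine Matrix.PosSemidef.of_dotProduct_mulVec_nonneg (Matrix.ext fun i j => ?_) (fun x => by rw [quad_eq]; exact h x)
  simp only [conjTranspose_apply, star_trivial]
  exact hsym j i

lemma quad_nonneg {M : Matrix (Fin m) (Fin m) ℝ} (hM : M.PosSemidef) (x : Fin m → ℝ) :
    0 ≤ ∑ i, ∑ j, x i * x j * M i j := by
  rw [← quad_eq]; exact hM.dotProduct_mulVec_nonneg x

lemma entry_symm {M : Matrix (Fin m) (Fin m) ℝ} (hM : M.IsHermitian) (i j : Fin m) :
    M i j = M j i := by
  conv_lhs => rw [← hM]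
  simp [conjTranspose_apply]

/-- Schur product theorem. -/
lemma schur {A B : Matrix (Fin m) (Fin m) ℝ} (hA : A.PosSemidef) (hB : B.PosSemidef) :
    (Matrix.of fun i j => A i j * B i j).PosSemidef := by
  obtain ⟨C, rfl⟩ : ∃ C : Matrix (Fin m) (Fin m) ℝ, A = Cᴴ * C := by
    open scoped MatrixOrder in
    exact CStarAlgebra.nonneg_iff_eq_star_mul_self.mp hA.nonneg
  have hAij : ∀ i j, (Cᴴ * C) i j = ∑ k, C k i * C k j := by
    intro i j
    simp [Matrix.mul_apply, conjTranspose_apply]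
  refine posSemidef_of _ (fun i j => ?_) (fun x => ?_)
  · simp only [Matrix.of_apply]
    rw [entry_symm (posSemidef_conjTranspose_mul_self C).1 i j, entry_symm hB.1 i j]
  · have key : ∀ i j, x i * x j * ((Cᴴ * C) i j * B i j)
        = ∑ k, (x i * C k i) * ((x j * C k j) * B i j) := by
      intro i j
      rw [hAij, Finset.sum_mul, Finset.mul_sum]
      exact Finset.sum_congr rfl fun k _ => by ring
    simp only [Matrix.of_apply]
    calc 0 ≤ ∑ k, ∑ i, ∑ j, (x i * C k i) * ((x j * C k j) * B i j) := by
            refine Finset.sum_nonneg fun k _ => ?_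
            have := quad_nonneg hB (fun i => x i * C k i)
            refine le_of_le_of_eq this (Finset.sum_congr rfl fun i _ =>
              Finset.sum_congr rfl fun j _ => by ring)
      _ = ∑ i, ∑ j, x i * x j * ((Cᴴ * C) i j * B i j) := by
            rw [Finset.sum_comm]
            refine Finset.sum_congr rfl fun i _ => ?_
            rw [Finset.sum_comm]
            exact Finset.sum_congr rfl fun j _ => (key i j).symm

lemma hadamard_pow_psd {G : Matrix (Fin m) (Fin m) ℝ} (hG : G.PosSemidef) (k : ℕ) :
    (Matrix.of fun i j => G i j ^ k).PosSemidef := by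
  induction k with
  | zero =>
      refine posSemidef_of _ (fun i j => by simp) (fun x => ?_)
      simp only [Matrix.of_apply, pow_zero, mul_one]
      calc (0:ℝ) ≤ (∑ i, x i) * (∑ j, x j) := mul_self_nonneg _
        _ = ∑ i, ∑ j, x i * x j := Finset.sum_mul_sum _ _ _ _
  | succ k ih =>
      have h2 : (Matrix.of fun i j => G i j ^ (k+1))
          = Matrix.of fun i j => G i j * (Matrix.of fun i j => G i j ^ k) i j := by
        ext i j
        simp [pow_succ, mul_comm]
      rw [h2]
      exact schur hG ih

lemma tsum_psd {G : Matrix (Fin m) (Fin m) ℝ} (hG : G.PosSemidef) (c : ℕ → ℝ)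
    (hc : ∀ k, 0 ≤ c k) (hs : ∀ i j, Summable fun k => c k * G i j ^ k) :
    (Matrix.of fun i j => ∑' k, c k * G i j ^ k).PosSemidef := by
  refine posSemidef_of _ (fun i j => ?_) (fun x => ?_)
  · simp only [Matrix.of_apply]
    exact tsum_congr fun k => by rw [entry_symm hG.1 i j]
  · simp only [Matrix.of_apply]
    have h1 : ∀ i j : Fin m, x i * x j * (∑' k, c k * G i j ^ k)
        = ∑' k, x i * x j * (c k * G i j ^ k) := fun i j => (tsum_mul_left).symm
    simp_rw [h1]
    have swap : ∑ i, ∑ j, ∑' k, x i * x j * (c k * G i j ^ k)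
        = ∑' k, ∑ i, ∑ j, x i * x j * (c k * G i j ^ k) := by
      rw [eq_comm]
      rw [Summable.tsum_finsetSum (fun i _ => summable_sum (fun j _ => ((hs i j).mul_left _)))]
      exact Finset.sum_congr rfl fun i _ => Summable.tsum_finsetSum (fun j _ => ((hs i j).mul_left _))
    rw [swap]
    refine tsum_nonneg fun k => ?_
    have hp := quad_nonneg (hadamard_pow_psd hG k) x
    have he : ∑ i, ∑ j, x i * x j * (c k * G i j ^ k)
        = c k * ∑ i, ∑ j, x i * x j * G i j ^ k := by
      rw [Finset.mul_sum]
      refine Finset.sum_congr rfl fun i _ => ?_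
      rw [Finset.mul_sum]
      exact Finset.sum_congr rfl fun j _ => by ring
    rw [he]
    refine mul_nonneg (hc k) ?_
    simpa using hp

lemma real_exp_tsum (x : ℝ) : Real.exp x = ∑' k : ℕ, x ^ k / (Nat.factorial k) := by
  rw [Real.exp_eq_exp_ℝ, NormedSpace.exp_eq_tsum_div]

/-- PSD of `exp(t•G) + σ exp(εt•G)` entrywise, for `σ, ε ∈ {±1}`, `t ≥ 0`, `G` PSD. -/
lemma psd_exp_pm {G : Matrix (Fin m) (Fin m) ℝ} (hG : G.PosSemidef) (t ε σ : ℝ)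
    (ht : 0 ≤ t) (hε : ε = 1 ∨ ε = -1) (hσ : σ = 1 ∨ σ = -1) :
    (Matrix.of fun i j =>
      Real.exp (t * G i j) + σ * Real.exp ((ε * t) * G i j)).PosSemidef := by
  set c : ℕ → ℝ := fun k => (1 + σ * ε ^ k) * (t ^ k / (Nat.factorial k)) with hcdef
  have hεk : ∀ k : ℕ, ε ^ k = 1 ∨ ε ^ k = -1 := by
    intro k
    rcases hε with rfl | rfl
    · left; simp
    · exact neg_one_pow_eq_or ℝ k
  have hc : ∀ k, 0 ≤ c k := by
    intro k
    refine mul_nonneg ?_ (div_nonneg (pow_nonneg ht k) (by positivity))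
    rcases hσ with rfl | rfl <;> rcases hεk k with h | h <;> rw [h] <;> norm_num
  have hterm : ∀ (g : ℝ) (k : ℕ), c k * g ^ k
      = (t * g) ^ k / (Nat.factorial k) + σ * ((ε * (t * g)) ^ k / (Nat.factorial k)) := by
    intro g k
    simp only [hcdef, mul_pow]
    ring
  have hs : ∀ i j, Summable fun k => c k * G i j ^ k := by
    intro i j
    refine Summable.congr ?_ (fun k => (hterm (G i j) k).symm)
    exact (Real.summable_pow_div_factorial _).add
      (((Real.summable_pow_div_factorial _)).mul_left σ)
  have hval : ∀ g : ℝ, (∑' k, c k * g ^ k)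
      = Real.exp (t * g) + σ * Real.exp ((ε * t) * g) := by
    intro g
    have h1 := Real.summable_pow_div_factorial (t * g)
    have h2 := (Real.summable_pow_div_factorial (ε * (t * g))).mul_left σ
    calc (∑' k, c k * g ^ k)
        = ∑' k, ((t*g) ^ k / (Nat.factorial k) + σ * ((ε*(t*g)) ^ k / (Nat.factorial k))) :=
          tsum_congr fun k => hterm g k
      _ = (∑' k, (t*g) ^ k / (Nat.factorial k))
          + ∑' k, σ * ((ε*(t*g)) ^ k / (Nat.factorial k)) := Summable.tsum_add h1 h2
      _ = Real.exp (t * g) + σ * Real.exp ((ε * t) * g) := by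
          rw [tsum_mul_left, ← real_exp_tsum, ← real_exp_tsum, mul_assoc]
  have hmat : (Matrix.of fun i j =>
      Real.exp (t * G i j) + σ * Real.exp ((ε * t) * G i j))
      = Matrix.of fun i j => ∑' k, c k * G i j ^ k := by
    ext i j
    simp only [Matrix.of_apply]
    rw [hval]
  rw [hmat]
  exact tsum_psd hG c hc hs

lemma psd_diag_nonneg {M : Matrix (Fin m) (Fin m) ℝ} (hM : M.PosSemidef) (i : Fin m) :
    0 ≤ M i i := by
  simpa using hM.dotProduct_mulVec_nonneg (Pi.single i 1)

/-- Key determinant bound: if `B` is symmetric with `-A ⪯ B ⪯ A` and `A` has unit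
diagonal then `|det B| ≤ 1`. -/
lemma abs_det_le_one {A B : Matrix (Fin m) (Fin m) ℝ} (hB : B.IsHermitian)
    (h1 : (A - B).PosSemidef) (h2 : (A + B).PosSemidef) (hd : ∀ i, A i i = 1) :
    |B.det| ≤ 1 := by
  set V : Matrix (Fin m) (Fin m) ℝ := (Matrix.IsHermitian.eigenvectorUnitary hB : Matrix (Fin m) (Fin m) ℝ) with hVdef
  set ν : Fin m → ℝ := hB.eigenvalues with hνdef
  have hVV : V * star V = 1 :=
    Matrix.mem_unitaryGroup_iff.mp (Matrix.IsHermitian.eigenvectorUnitary hB).2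
  have hdiagB : star V * B * V = Matrix.diagonal ν := by
    have := hB.conjStarAlgAut_star_eigenvectorUnitary
    simpa using this
  set δ : Fin m → ℝ := fun i => (star V * A * V) i i with hδdef
  have hsplit1 : star V * (A - B) * V = star V * A * V - Matrix.diagonal ν := by
    rw [← hdiagB]; noncomm_ring
  have hsplit2 : star V * (A + B) * V = star V * A * V + Matrix.diagonal ν := by
    rw [← hdiagB]; noncomm_ring
  have hb1 : ∀ i, 0 ≤ δ i - ν i := by
    intro i
    have := psd_diag_nonneg (h1.conjTranspose_mul_mul_same V) i
    rw [← Matrix.star_eq_conjTranspose, hsplit1] at this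
    simpa [hδdef] using this
  have hb2 : ∀ i, 0 ≤ δ i + ν i := by
    intro i
    have := psd_diag_nonneg (h2.conjTranspose_mul_mul_same V) i
    rw [← Matrix.star_eq_conjTranspose, hsplit2] at this
    simpa [hδdef] using this
  have hνδ : ∀ i, |ν i| ≤ δ i := by
    intro i
    rw [abs_le]
    constructor <;> [linarith [hb2 i]; linarith [hb1 i]]
  have htr : ∑ i, δ i = (m : ℝ) := by
    have h0 : ∑ i, δ i = Matrix.trace (star V * A * V) := by
      simp [Matrix.trace, Matrix.diag, hδdef]
    rw [h0, Matrix.trace_mul_cycle, hVV, one_mul]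
    simp [Matrix.trace, Matrix.diag, hd]
  have hdet : B.det = ∏ i, ν i := by simpa using hB.det_eq_prod_eigenvalues
  calc |B.det| = ∏ i, |ν i| := by rw [hdet, Finset.abs_prod]
    _ ≤ ∏ i, δ i := Finset.prod_le_prod (fun i _ => abs_nonneg _) (fun i _ => hνδ i)
    _ ≤ ∏ i, Real.exp (δ i - 1) := by
        refine Finset.prod_le_prod (fun i _ => (abs_nonneg _).trans (hνδ i)) (fun i _ => ?_)
        have := Real.add_one_le_exp (δ i - 1)
        linarith
    _ = Real.exp (∑ i, (δ i - 1)) := (Real.exp_sum _ _).symm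
    _ = 1 := by
        rw [Finset.sum_sub_distrib, htr]
        simp

end Stmt11Aux

/-- the Gaussian overlap kernel decays away from the diagonal and
anti-diagonal. -/
theorem stmt11 (n d : ℕ) (hn : 1 ≤ n) (hd : 1 ≤ d) (w : Conf n d) (θ θ' : ℝ) :
    |DN w θ θ'| ≤ Real.exp (-(confNorm w ^ 2 / 2) * (|θ| - |θ'|) ^ 2) := by
  classical
  set s : ℝ := θ * θ' with hsdef
  set t : ℝ := |s| with htdef
  have ht : (0:ℝ) ≤ t := abs_nonneg _
  set ε : ℝ := if 0 ≤ s then 1 else -1 with hεdef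
  have hε1 : ε = 1 ∨ ε = -1 := by
    by_cases h : 0 ≤ s <;> simp [hεdef, h]
  have hst : s = ε * t := by
    by_cases h : 0 ≤ s
    · simp [hεdef, h, htdef, _root_.abs_of_nonneg h]
    · push_neg at h
      simp [hεdef, not_le.mpr h, htdef, _root_.abs_of_neg h]
  set G : Matrix (Fin n) (Fin n) ℝ := Matrix.of fun i j => (inner ℝ (w i) (w j) : ℝ) with hGdef
  have hG : G.PosSemidef := by
    refine Stmt11Aux.posSemidef_of _ (fun i j => ?_) (fun x => ?_)
    · simp only [hGdef, Matrix.of_apply]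
      exact real_inner_comm _ _
    · have hq : (inner ℝ (∑ i, x i • w i) (∑ i, x i • w i) : ℝ) = ∑ i, ∑ j, x i * x j * G i j := by
        rw [sum_inner]
        refine Finset.sum_congr rfl fun i _ => ?_
        rw [real_inner_smul_left, inner_sum, Finset.mul_sum]
        refine Finset.sum_congr rfl fun j _ => ?_
        rw [real_inner_smul_right]
        simp only [hGdef, Matrix.of_apply]
        ring
      rw [← hq]
      exact real_inner_self_nonneg
  set u : Fin n → ℝ := fun i => Real.exp (-(t * ‖w i‖ ^ 2) / 2) with hudef
  set Bt : Matrix (Fin n) (Fin n) ℝ :=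
    Matrix.of (fun i j => u i * (Real.exp (s * G i j) * u j)) with hBtdef
  set At : Matrix (Fin n) (Fin n) ℝ :=
    Matrix.of (fun i j => u i * (Real.exp (t * G i j) * u j)) with hAtdef
  have hBsym : Bt.IsHermitian := by
    refine Matrix.ext fun i j => ?_
    simp only [hBtdef, Matrix.conjTranspose_apply, Matrix.of_apply, star_trivial,
      hGdef]
    rw [real_inner_comm]
    ring
  have hDconj : ∀ (X : Matrix (Fin n) (Fin n) ℝ), X.PosSemidef →
      (Matrix.of fun i j => u i * (X i j * u j)).PosSemidef := by
    intro X hX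
    have h := hX.conjTranspose_mul_mul_same (Matrix.diagonal u)
    have he : (Matrix.diagonal u)ᴴ * X * Matrix.diagonal u
        = Matrix.of fun i j => u i * (X i j * u j) := by
      ext i j
      rw [Matrix.diagonal_conjTranspose]
      simp only [Matrix.mul_diagonal, Matrix.diagonal_mul, Matrix.of_apply,
        Pi.star_apply, star_trivial]
      ring
    rwa [he] at h
  have h1 : (At - Bt).PosSemidef := by
    have hX := Stmt11Aux.psd_exp_pm hG t ε (-1) ht hε1 (Or.inr rfl)
    have e1 : (Matrix.of fun i j => Real.exp (t * G i j) + (-1) * Real.exp ((ε * t) * G i j))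
        = Matrix.of fun i j => Real.exp (t * G i j) - Real.exp (s * G i j) := by
      ext i j
      simp only [Matrix.of_apply]
      rw [show (ε * t) * G i j = s * G i j by rw [hst]]
      ring
    rw [e1] at hX
    have h := hDconj _ hX
    have e2 : At - Bt
        = Matrix.of fun i j =>
            u i * ((Matrix.of fun i j => Real.exp (t * G i j) - Real.exp (s * G i j)) i j * u j) := by
      ext i j
      simp only [Matrix.sub_apply, hAtdef, hBtdef, Matrix.of_apply]
      ring
    rw [e2]
    exact h
  have h2 : (At + Bt).PosSemidef := by
    have hX := Stmt11Aux.psd_exp_pm hG t ε 1 ht hε1 (Or.inl rfl)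
    have e1 : (Matrix.of fun i j => Real.exp (t * G i j) + 1 * Real.exp ((ε * t) * G i j))
        = Matrix.of fun i j => Real.exp (t * G i j) + Real.exp (s * G i j) := by
      ext i j
      simp only [Matrix.of_apply]
      rw [show (ε * t) * G i j = s * G i j by rw [hst]]
      ring
    rw [e1] at hX
    have h := hDconj _ hX
    have e2 : At + Bt
        = Matrix.of fun i j =>
            u i * ((Matrix.of fun i j => Real.exp (t * G i j) + Real.exp (s * G i j)) i j * u j) := by
      ext i j
      simp only [Matrix.add_apply, hAtdef, hBtdef, Matrix.of_apply]
      ring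
    rw [e2]
    exact h
  have hdiag : ∀ i, At i i = 1 := by
    intro i
    simp only [hAtdef, Matrix.of_apply, hudef, hGdef]
    rw [real_inner_self_eq_norm_sq, ← Real.exp_add, ← Real.exp_add, ← Real.exp_zero]
    congr 1
    ring
  have key : |Bt.det| ≤ 1 := Stmt11Aux.abs_det_le_one hBsym h1 h2 hdiag
  set p : Fin n → ℝ := fun i => Real.exp ((t - θ ^ 2) * ‖w i‖ ^ 2 / 2) with hpdef
  set q : Fin n → ℝ := fun j => Real.exp ((t - θ' ^ 2) * ‖w j‖ ^ 2 / 2) with hqdef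
  have hexp : ∀ i j, ‖θ • w i - θ' • w j‖ ^ 2
      = θ ^ 2 * ‖w i‖ ^ 2 - 2 * s * (inner ℝ (w i) (w j) : ℝ) + θ' ^ 2 * ‖w j‖ ^ 2 := by
    intro i j
    rw [norm_sub_sq_real, real_inner_smul_left, real_inner_smul_right, norm_smul, norm_smul]
    simp only [Real.norm_eq_abs, mul_pow, _root_.sq_abs, hsdef]
    ring
  have hfact : (Matrix.of fun i j : Fin n => Real.exp (-‖θ • w i - θ' • w j‖ ^ 2 / 2))
      = Matrix.diagonal p * Bt * Matrix.diagonal q := by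
    ext i j
    simp only [Matrix.mul_diagonal, Matrix.diagonal_mul, Matrix.of_apply, hBtdef, hpdef, hqdef,
      hudef, hGdef]
    rw [← Real.exp_add, ← Real.exp_add, ← Real.exp_add, ← Real.exp_add]
    congr 1
    rw [hexp i j]
    ring
  have hDN : DN w θ θ' = (∏ i, p i) * Bt.det * (∏ i, q i) := by
    rw [DN, hfact, Matrix.det_mul, Matrix.det_mul, Matrix.det_diagonal, Matrix.det_diagonal]
  have hp_pos : (0:ℝ) < ∏ i, p i := Finset.prod_pos fun i _ => Real.exp_pos _
  have hq_pos : (0:ℝ) < ∏ i, q i := Finset.prod_pos fun i _ => Real.exp_pos _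
  have habs : |DN w θ θ'| ≤ (∏ i, p i) * (∏ i, q i) := by
    rw [hDN, abs_mul, abs_mul, abs_of_pos hp_pos, abs_of_pos hq_pos]
    calc (∏ i, p i) * |Bt.det| * (∏ i, q i)
        ≤ (∏ i, p i) * 1 * (∏ i, q i) := by gcongr
      _ = (∏ i, p i) * (∏ i, q i) := by ring
  have hfin : (∏ i, p i) * (∏ i, q i)
      = Real.exp (-(confNorm w ^ 2 / 2) * (|θ| - |θ'|) ^ 2) := by
    rw [← Finset.prod_mul_distrib]
    have hterm : ∀ i, p i * q i = Real.exp (-((|θ| - |θ'|) ^ 2 / 2) * ‖w i‖ ^ 2) := by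
      intro i
      simp only [hpdef, hqdef]
      rw [← Real.exp_add]
      congr 1
      have h2t : t = |θ| * |θ'| := by rw [htdef, hsdef, abs_mul]
      have e : (|θ| - |θ'|) ^ 2 = θ ^ 2 - 2 * (|θ| * |θ'|) + θ' ^ 2 := by
        rw [sub_sq, _root_.sq_abs, _root_.sq_abs]
        ring
      rw [h2t, e]
      ring
    rw [Finset.prod_congr rfl (fun i _ => hterm i), ← Real.exp_sum]
    congr 1
    rw [← Finset.mul_sum]
    have hconf : confNorm w ^ 2 = ∑ i, ‖w i‖ ^ 2 := by
      rw [confNorm]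
      exact Real.sq_sqrt (Finset.sum_nonneg fun i _ => sq_nonneg _)
    rw [hconf]
    ring
  rw [← hfin]
  exact habs

end
end

section
/- Let n, d ≥ 1 and v, w ∈ (ℝ^d)^n. Then there exist complex n×n matrices Q_0, Q_1, Q_2, … such that the series Σ_{k=0}^∞ Q_k converges entrywise (absolutely) to the matrix (exp(v_i·w_j))_{i,j=1}^n, and for every k ≥ 0: rank(Q_k) ≤ C(k+d−1, d−1) and the operator norm satisfies ‖Q_k‖ ≤ n·(‖v‖_∞ ‖w‖_∞ d)^k / k!. -/
open MeasureTheory Complex Matrix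
open scoped BigOperators RealInnerProductSpace ENNReal NNReal

noncomputable section

open Finset in
private lemma stmt13_card_piAntidiag_le (d k : ℕ) (hd : 1 ≤ d) :
    (Finset.piAntidiag (Finset.univ : Finset (Fin d)) k).card ≤ (k + d - 1).choose (d - 1) := by
  classical
  have hcard : ∀ m : Fin d → ℕ, m ∈ Finset.piAntidiag (Finset.univ : Finset (Fin d)) k →
      Multiset.card (∑ i, Multiset.replicate (m i) i) = k := by
    intro m hm
    rw [Finset.mem_piAntidiag] at hm
    have hc : Multiset.card (∑ i, Multiset.replicate (m i) i) = ∑ i, m i := by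
      set_option linter.unnecessarySimpa false in
      simpa using map_sum (⟨⟨Multiset.card, Multiset.card_zero⟩, Multiset.card_add⟩ :
        Multiset (Fin d) →+ ℕ) (fun i => Multiset.replicate (m i) i) Finset.univ
    rw [hc]
    exact hm.1
  let g : {m : Fin d → ℕ // m ∈ Finset.piAntidiag (Finset.univ : Finset (Fin d)) k} →
      Sym (Fin d) k := fun m => ⟨∑ i, Multiset.replicate (m.1 i) i, hcard m.1 m.2⟩
  have hginj : Function.Injective g := by
    intro m m' h
    have h2 : (∑ i, Multiset.replicate (m.1 i) i) = ∑ i, Multiset.replicate (m'.1 i) i :=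
      congrArg Sym.toMultiset h
    ext j
    have := congrArg (Multiset.count j) h2
    simpa [Multiset.count_sum', Multiset.count_replicate] using this
  have h3 := Fintype.card_le_of_injective g hginj
  rw [Fintype.card_coe] at h3
  refine h3.trans ?_
  rw [Sym.card_sym_eq_multichoose, Fintype.card_fin, Nat.multichoose_eq]
  have h4 : d + k - 1 = k + d - 1 := by omega
  have h5 : (k + d - 1) - k = d - 1 := by omega
  rw [h4, ← h5, Nat.choose_symm (by omega)]

private lemma stmt13_abs_le_linf {n d : ℕ} (v : Conf n d) (i : Fin n) (j : Fin d) :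
    |v i j| ≤ linf v := by
  have h1 : |v i j| ≤ ⨆ j : Fin d, |v i j| :=
    le_ciSup (f := fun j : Fin d => |v i j|) (Set.Finite.bddAbove (Set.finite_range _)) j
  exact h1.trans (le_ciSup (f := fun i : Fin n => ⨆ j : Fin d, |v i j|)
    (Set.Finite.bddAbove (Set.finite_range _)) i)

private lemma stmt13_inner_abs_le {n d : ℕ} (hd : 1 ≤ d) (v w : Conf n d) (i j : Fin n) :
    |(⟪v i, w j⟫ : ℝ)| ≤ linf v * linf w * d := by
  have h0 : (⟪v i, w j⟫ : ℝ) = ∑ l, v i l * w j l := by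
    simp [PiLp.inner_apply, RCLike.inner_apply]
    exact Finset.sum_congr rfl fun _ _ => mul_comm _ _
  rw [h0]
  calc |∑ l, v i l * w j l| ≤ ∑ l, |v i l * w j l| := Finset.abs_sum_le_sum_abs _ _
    _ ≤ ∑ _l : Fin d, linf v * linf w := by
        refine Finset.sum_le_sum fun l _ => ?_
        rw [abs_mul]
        exact mul_le_mul (stmt13_abs_le_linf v i l) (stmt13_abs_le_linf w j l) (abs_nonneg _)
          ((abs_nonneg _).trans (stmt13_abs_le_linf v i ⟨0, hd⟩))
    _ = linf v * linf w * d := by simp [mul_comm]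

private lemma stmt13_linf_nonneg {n d : ℕ} (hn : 1 ≤ n) (hd : 1 ≤ d) (v : Conf n d) :
    0 ≤ linf v :=
  (abs_nonneg _).trans (stmt13_abs_le_linf v ⟨0, hn⟩ ⟨0, hd⟩)

open Finset in
private lemma stmt13_rank_aux (n d k : ℕ) (hd : 1 ≤ d) (v w : Conf n d) :
    (Matrix.of fun i j : Fin n =>
      ((⟪v i, w j⟫ : ℝ) : ℂ)^k / (Nat.factorial k : ℂ)).rank ≤ (k + d - 1).choose (d - 1) := by
  classical
  set s := Finset.piAntidiag (Finset.univ : Finset (Fin d)) k with hs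
  let A : Matrix (Fin n) {m // m ∈ s} ℂ := Matrix.of fun i m =>
    ((Nat.multinomial Finset.univ m.1 : ℂ) / (Nat.factorial k : ℂ)) * ∏ l, ((v i l : ℂ))^(m.1 l)
  let B : Matrix {m // m ∈ s} (Fin n) ℂ := Matrix.of fun m j => ∏ l, ((w j l : ℂ))^(m.1 l)
  have hQ : (Matrix.of fun i j : Fin n =>
      ((⟪v i, w j⟫ : ℝ) : ℂ)^k / (Nat.factorial k : ℂ)) = A * B := by
    ext i j
    have hin : ((⟪v i, w j⟫ : ℝ) : ℂ) = ∑ l, (v i l : ℂ) * (w j l : ℂ) := by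
      have : (⟪v i, w j⟫ : ℝ) = ∑ l, v i l * w j l := by
        simp [PiLp.inner_apply, RCLike.inner_apply]
        exact Finset.sum_congr rfl fun _ _ => mul_comm _ _
      rw [this]; push_cast; rfl
    rw [Matrix.mul_apply, Matrix.of_apply, hin,
      Finset.sum_pow_eq_sum_piAntidiag Finset.univ _ k, ← hs, Finset.sum_div,
      ← Finset.sum_coe_sort s]
    refine Finset.sum_congr rfl fun m _ => ?_
    simp only [A, B, Matrix.of_apply]
    simp_rw [mul_pow]
    rw [Finset.prod_mul_distrib]
    ring
  rw [hQ]
  exact le_trans (le_trans (Matrix.rank_mul_le_left A B) (Matrix.rank_le_card_width A))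
    (by rw [Fintype.card_coe]; exact stmt13_card_piAntidiag_le d k hd)

private lemma stmt13_opnorm_aux (n : ℕ) (M : ℝ) (hM : 0 ≤ M) (Q : Matrix (Fin n) (Fin n) ℂ)
    (hQ : ∀ i j, ‖Q i j‖ ≤ M) :
    ‖Matrix.toEuclideanCLM (𝕜 := ℂ) Q‖ ≤ n * M := by
  refine ContinuousLinearMap.opNorm_le_bound _ (by positivity) fun x => ?_
  have hcoord : ∀ i, (Matrix.toEuclideanCLM (𝕜 := ℂ) Q x) i = ∑ j, Q i j * x j := by
    intro i
    have h := congrFun (Matrix.ofLp_toEuclideanCLM Q x) i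
    simpa [Matrix.mulVec, dotProduct] using h
  have hxsq : ‖x‖ ^ 2 = ∑ j, ‖x j‖ ^ 2 := PiLp.norm_sq_eq_of_L2 _ x
  have hterm : ∀ i, ‖(Matrix.toEuclideanCLM (𝕜 := ℂ) Q x) i‖ ^ 2 ≤ M ^ 2 * (n * ‖x‖ ^ 2) := by
    intro i
    have h1 : ‖(Matrix.toEuclideanCLM (𝕜 := ℂ) Q x) i‖ ≤ M * ∑ j, ‖x j‖ := by
      rw [hcoord i]
      calc ‖∑ j, Q i j * x j‖ ≤ ∑ j, ‖Q i j * x j‖ := norm_sum_le _ _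
        _ ≤ ∑ j, M * ‖x j‖ := by
            refine Finset.sum_le_sum fun j _ => ?_
            rw [norm_mul]
            exact mul_le_mul_of_nonneg_right (hQ i j) (norm_nonneg _)
        _ = M * ∑ j, ‖x j‖ := by rw [Finset.mul_sum]
    have h2 : (∑ j, ‖x j‖) ^ 2 ≤ n * ∑ j, ‖x j‖ ^ 2 := by
      simpa using sq_sum_le_card_mul_sum_sq (s := Finset.univ) (f := fun j : Fin n => ‖x j‖)
    calc ‖(Matrix.toEuclideanCLM (𝕜 := ℂ) Q x) i‖ ^ 2 ≤ (M * ∑ j, ‖x j‖) ^ 2 :=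
          pow_le_pow_left₀ (norm_nonneg _) h1 2
      _ = M ^ 2 * (∑ j, ‖x j‖) ^ 2 := by ring
      _ ≤ M ^ 2 * (n * ∑ j, ‖x j‖ ^ 2) :=
          mul_le_mul_of_nonneg_left h2 (by positivity)
      _ = M ^ 2 * (n * ‖x‖ ^ 2) := by rw [hxsq]
  have hsq : ‖Matrix.toEuclideanCLM (𝕜 := ℂ) Q x‖ ^ 2 ≤ (n * M * ‖x‖) ^ 2 := by
    rw [PiLp.norm_sq_eq_of_L2]
    calc ∑ i, ‖(Matrix.toEuclideanCLM (𝕜 := ℂ) Q x) i‖ ^ 2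
        ≤ ∑ _i : Fin n, M ^ 2 * (n * ‖x‖ ^ 2) := Finset.sum_le_sum fun i _ => hterm i
      _ = (n * M * ‖x‖) ^ 2 := by simp [Finset.sum_const]; ring
  have h := Real.sqrt_le_sqrt hsq
  rwa [Real.sqrt_sq (norm_nonneg _), Real.sqrt_sq (by positivity)] at h

/-- the matrix `(e^{vᵢ·wⱼ})` decomposes as an entrywise absolutely convergent
series `Σₖ Qₖ` with rank and operator-norm bounds on the terms. -/
theorem stmt13 (n d : ℕ) (hn : 1 ≤ n) (hd : 1 ≤ d) (v w : Conf n d) :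
    ∃ Q : ℕ → Matrix (Fin n) (Fin n) ℂ,
      (∀ i j : Fin n, Summable (fun k => ‖Q k i j‖) ∧
        ∑' k, Q k i j = Complex.exp ((⟪v i, w j⟫ : ℝ))) ∧
      ∀ k : ℕ,
        (Q k).rank ≤ (k + d - 1).choose (d - 1) ∧
        ‖Matrix.toEuclideanCLM (𝕜 := ℂ) (Q k)‖
          ≤ (n : ℝ) * (linf v * linf w * d) ^ k / (Nat.factorial k : ℝ) := by
  classical
  refine ⟨fun k => Matrix.of fun i j =>
    ((⟪v i, w j⟫ : ℝ) : ℂ)^k / (Nat.factorial k : ℂ), fun i j => ⟨?_, ?_⟩, fun k => ⟨?_, ?_⟩⟩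
  · set a : ℝ := (⟪v i, w j⟫ : ℝ) with ha
    refine (Real.summable_pow_div_factorial |a|).congr fun k => ?_
    simp only [Matrix.of_apply, norm_div, norm_pow, Complex.norm_real, Real.norm_eq_abs,
      Complex.norm_natCast, ha]
  · simp only [Matrix.of_apply]
    rw [Complex.exp_eq_exp_ℂ, NormedSpace.exp_eq_tsum_div]
  · exact stmt13_rank_aux n d k hd v w
  · have hv := stmt13_linf_nonneg hn hd v
    have hw := stmt13_linf_nonneg hn hd w
    have hM : 0 ≤ (linf v * linf w * d) ^ k / (Nat.factorial k : ℝ) := by positivity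
    have hb := stmt13_opnorm_aux n _ hM
      (Matrix.of fun i j : Fin n => ((⟪v i, w j⟫ : ℝ) : ℂ)^k / (Nat.factorial k : ℂ)) ?_
    · calc ‖Matrix.toEuclideanCLM (𝕜 := ℂ) (Matrix.of fun i j : Fin n =>
            ((⟪v i, w j⟫ : ℝ) : ℂ)^k / (Nat.factorial k : ℂ))‖
          ≤ n * ((linf v * linf w * d) ^ k / (Nat.factorial k : ℝ)) := hb
        _ = (n : ℝ) * (linf v * linf w * d) ^ k / (Nat.factorial k : ℝ) := by ring
    · intro i j
      have hentry : ‖((⟪v i, w j⟫ : ℝ) : ℂ)^k / (Nat.factorial k : ℂ)‖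
          = |(⟪v i, w j⟫ : ℝ)| ^ k / (Nat.factorial k : ℝ) := by
        set a : ℝ := (⟪v i, w j⟫ : ℝ) with ha
        simp only [norm_div, norm_pow, Complex.norm_real, Real.norm_eq_abs,
          Complex.norm_natCast]
      simp only [Matrix.of_apply]
      rw [hentry]
      exact div_le_div_of_nonneg_right
        (pow_le_pow_left₀ (abs_nonneg _) (stmt13_inner_abs_le hd v w i j) k)
        (by positivity)
end
end

section
/- Let n, d ≥ 1, v, w ∈ (ℝ^d)^n, and set μ = d·‖v‖_∞·‖w‖_∞. Let σ_0 ≥ σ_1 ≥ … ≥ σ_{n−1} be the singular values of the matrix A = (exp(v_i·w_j))_{i,j=1}^n. Then σ_0 ≤ n·e^μ, and if μ ≤ 1/2 then for every integer p ≥ 1 with L = C(p+d−1, d) ≤ n−1, one has σ_L ≤ (2n/p!)·μ^p. -/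
open MeasureTheory Complex Matrix
open scoped BigOperators RealInnerProductSpace ENNReal NNReal

noncomputable section

lemma stmt14_sumrec (d : ℕ) (α α' : Fin d → ℕ)
    (h : ∀ i : Fin d, ∑ t ∈ Finset.univ.filter (· ≤ i), α t
        = ∑ t ∈ Finset.univ.filter (· ≤ i), α' t) : α = α' := by
  suffices H : ∀ m : ℕ, ∀ i : Fin d, (i : ℕ) = m → α i = α' i by
    funext i; exact H i i rfl
  intro m
  induction m using Nat.strong_induction_on with
  | _ m IH =>
    intro i him
    have hsplit : ∀ β : Fin d → ℕ, ∑ t ∈ Finset.univ.filter (· ≤ i), β t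
        = (∑ t ∈ Finset.univ.filter (· < i), β t) + β i := by
      intro β
      have : Finset.univ.filter (· ≤ i) = insert i (Finset.univ.filter (· < i)) := by
        ext t
        simp [le_iff_lt_or_eq, or_comm]
      rw [this, Finset.sum_insert (by simp), add_comm]
    have hlt : ∑ t ∈ Finset.univ.filter (· < i), α t
        = ∑ t ∈ Finset.univ.filter (· < i), α' t := by
      apply Finset.sum_congr rfl
      intro t ht
      have htv : t < i := by simpa using ht
      exact IH (t : ℕ) (by omega) t rfl
    have := h i
    rw [hsplit α, hsplit α', hlt] at this
    omega

lemma stmt14_count (d p : ℕ) (hd : 1 ≤ d) (hp : 1 ≤ p) :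
    ((Finset.range p).biUnion (fun k => Finset.piAntidiag (Finset.univ : Finset (Fin d)) k)).card
      ≤ (p + d - 1).choose d := by
  classical
  set I := (Finset.range p).biUnion (fun k => Finset.piAntidiag (Finset.univ : Finset (Fin d)) k) with hI
  have hmem : ∀ α : Fin d → ℕ, α ∈ I → (∑ s, α s) < p := by
    intro α hα
    rw [hI, Finset.mem_biUnion] at hα
    obtain ⟨k, hk, hα⟩ := hα
    rw [Finset.mem_piAntidiag] at hα
    rw [hα.1]
    exact Finset.mem_range.1 hk
  have key : ∀ (α : Fin d → ℕ), (∑ s, α s) < p → ∀ i : Fin d,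
      (i : ℕ) + ∑ t ∈ Finset.univ.filter (· ≤ i), α t < p + d - 1 := by
    intro α hα i
    have h1 : ∑ t ∈ Finset.univ.filter (· ≤ i), α t ≤ ∑ s, α s :=
      Finset.sum_le_sum_of_subset (Finset.filter_subset _ _)
    have h2 : (i : ℕ) < d := i.2
    omega
  -- the strictly monotone map associated to α ∈ I
  let g : ↥I → Fin d → Fin (p + d - 1) := fun α i =>
    ⟨(i : ℕ) + ∑ t ∈ Finset.univ.filter (· ≤ i), (α : Fin d → ℕ) t,
      key α (hmem α α.2) i⟩
  have hgmono : ∀ α : ↥I, StrictMono (g α) := by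
    intro α i j hij
    have h1 : ∑ t ∈ Finset.univ.filter (· ≤ i), (α : Fin d → ℕ) t
        ≤ ∑ t ∈ Finset.univ.filter (· ≤ j), (α : Fin d → ℕ) t := by
      apply Finset.sum_le_sum_of_subset
      intro t ht
      simp only [Finset.mem_filter, Finset.mem_univ, true_and] at ht ⊢
      exact ht.trans hij.le
    have h2 : (i : ℕ) < (j : ℕ) := hij
    simp only [g, Fin.lt_def]
    omega
  have hginj : Function.Injective g := by
    intro α β hgeq
    apply Subtype.ext
    apply stmt14_sumrec d
    intro i
    have := congrFun hgeq i
    simp only [g, Fin.mk.injEq] at this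
    omega
  -- map to finsets
  let F : ↥I → {s : Finset (Fin (p + d - 1)) // s.card = d} := fun α =>
    ⟨Finset.image (g α) Finset.univ, by
      rw [Finset.card_image_of_injective _ (hgmono α).injective, Finset.card_univ,
        Fintype.card_fin]⟩
  have hFinj : Function.Injective F := by
    intro α β hF
    have hcard : (Finset.image (g α) Finset.univ).card = d := (F α).2
    have hmemα : ∀ x, g α x ∈ Finset.image (g α) Finset.univ := by
      intro x; exact Finset.mem_image_of_mem _ (Finset.mem_univ x)
    have hmemβ : ∀ x, g β x ∈ Finset.image (g α) Finset.univ := by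
      intro x
      have : (F β).1 = (F α).1 := by rw [hF]
      simp only [F] at this
      rw [← this]
      exact Finset.mem_image_of_mem _ (Finset.mem_univ x)
    have e1 := Finset.orderEmbOfFin_unique hcard hmemα (hgmono α)
    have e2 := Finset.orderEmbOfFin_unique hcard hmemβ (hgmono β)
    exact hginj (e1.trans e2.symm)
  calc I.card = Fintype.card ↥I := (Fintype.card_coe I).symm
    _ ≤ Fintype.card {s : Finset (Fin (p + d - 1)) // s.card = d} :=
        Fintype.card_le_of_injective F hFinj
    _ = (p + d - 1).choose d := by
        rw [Fintype.card_finset_len, Fintype.card_fin]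



lemma stmt14_master {n : ℕ} (A B : Matrix (Fin n) (Fin n) ℂ) {ι : Type} [Fintype ι]
    [DecidableEq ι]
    (r : ι → Fin n → ℂ)
    (hB : ∀ x : Fin n → ℂ, (∀ α : ι, ∑ j, r α j * x j = 0) → B *ᵥ x = 0)
    (ε : ℝ) (hε : 0 ≤ ε) (hE : ∀ i j, ‖A i j - B i j‖ ≤ ε)
    (S : Finset (Fin n)) (hcard : Fintype.card ι < S.card)
    (hf : ∀ j ∈ S, ((n : ℝ) * ε)^2 <
      (Matrix.isHermitian_conjTranspose_mul_self A).eigenvalues j) :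
    False := by
  classical
  set hM := Matrix.isHermitian_conjTranspose_mul_self A with hhM
  set f : Fin n → ℝ := hM.eigenvalues with hfdef
  set u : Fin n → Fin n → ℂ := fun j => ⇑(hM.eigenvectorBasis j) with hudef
  have horth : ∀ j j' : Fin n, ∑ k, (starRingEnd ℂ) (u j k) * u j' k
      = if j = j' then 1 else 0 := by
    have h := hM.eigenvectorBasis.orthonormal
    rw [orthonormal_iff_ite] at h
    intro j j'
    have := h j j'
    simpa [PiLp.inner_apply, RCLike.inner_apply, u, mul_comm] using this
  have heig : ∀ j : Fin n, (Aᴴ * A) *ᵥ u j = fun k => (f j : ℂ) * u j k := by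
    intro j
    have := hM.mulVec_eigenvectorBasis j
    funext k
    have := congrFun this k
    simpa [u, Complex.real_smul] using this
  -- find z in the kernel
  let C : Matrix ι ↥S ℂ := Matrix.of fun α j => ∑ k, r α k * u (j : Fin n) k
  have hker : LinearMap.ker C.mulVecLin ≠ ⊥ := by
    apply LinearMap.ker_ne_bot_of_finrank_lt
    rw [Module.finrank_pi, Module.finrank_pi]
    rwa [Fintype.card_coe]
  obtain ⟨z, hzmem, hz0⟩ := (Submodule.ne_bot_iff _).1 hker
  have hz : ∀ α : ι, ∑ j : ↥S, C α j * z j = 0 := by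
    intro α
    have := congrFun (LinearMap.mem_ker.1 hzmem) α
    simpa [Matrix.mulVecLin_apply, Matrix.mulVec, dotProduct] using this
  set x : Fin n → ℂ := fun k => ∑ j : ↥S, z j * u (j : Fin n) k with hxdef
  -- generic expansion
  have hexp : ∀ a b : ↥S → ℂ,
      ∑ k, (starRingEnd ℂ) (∑ j : ↥S, a j * u (j : Fin n) k)
        * (∑ j' : ↥S, b j' * u (j' : Fin n) k)
      = ∑ j : ↥S, (starRingEnd ℂ) (a j) * b j := by
    intro a b
    have : ∀ k, (starRingEnd ℂ) (∑ j : ↥S, a j * u (j : Fin n) k)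
        * (∑ j' : ↥S, b j' * u (j' : Fin n) k)
        = ∑ j : ↥S, ∑ j' : ↥S, ((starRingEnd ℂ) (a j) * b j')
            * ((starRingEnd ℂ) (u (j : Fin n) k) * u (j' : Fin n) k) := by
      intro k
      rw [map_sum, Finset.sum_mul]
      apply Finset.sum_congr rfl
      intro j _
      rw [Finset.mul_sum]
      apply Finset.sum_congr rfl
      intro j' _
      simp only [_root_.map_mul]
      ring
    rw [Finset.sum_congr rfl (fun k _ => this k)]
    rw [Finset.sum_comm]
    apply Finset.sum_congr rfl
    intro j _
    rw [Finset.sum_comm]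
    have : ∀ j' : ↥S, ∑ k, ((starRingEnd ℂ) (a j) * b j')
        * ((starRingEnd ℂ) (u (j : Fin n) k) * u (j' : Fin n) k)
        = ((starRingEnd ℂ) (a j) * b j') * if (j : Fin n) = (j' : Fin n) then 1 else 0 := by
      intro j'
      rw [← Finset.mul_sum, horth]
    rw [Finset.sum_congr rfl (fun j' _ => this j')]
    simp only [Subtype.coe_inj]
    simp [mul_ite]
  -- nonzero coefficient
  obtain ⟨j0, hj0⟩ := Function.ne_iff.1 hz0
  set Nz : ℝ := ∑ j : ↥S, Complex.normSq (z j) with hNz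
  -- the vector y = A x
  set y : Fin n → ℂ := A *ᵥ x with hydef
  -- casting helper
  have cast1 : ∀ (m : Type) (_ : Fintype m) (g : m → ℂ),
      ((∑ k, Complex.normSq (g k) : ℝ) : ℂ) = ∑ k, (starRingEnd ℂ) (g k) * g k := by
    intro m _ g
    rw [Complex.ofReal_sum]
    exact Finset.sum_congr rfl fun k _ => Complex.normSq_eq_conj_mul_self
  -- ∑ normSq x = Nz
  have hxxC : ∑ k, (starRingEnd ℂ) (x k) * x k = ∑ j : ↥S, (starRingEnd ℂ) (z j) * z j :=
    hexp z z
  have hxx : ∑ k, Complex.normSq (x k) = Nz := by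
    have := (cast1 _ _ x).trans (hxxC.trans (cast1 _ _ z).symm)
    exact_mod_cast this
  -- eigen-expansion of M x
  have hMx : ∀ k, ((Aᴴ * A) *ᵥ x) k
      = ∑ j : ↥S, ((f (j : Fin n) : ℂ) * z j) * u (j : Fin n) k := by
    intro k
    have e1 : ((Aᴴ * A) *ᵥ x) k = ∑ l, (Aᴴ * A) k l * x l := rfl
    rw [e1]
    simp only [hxdef]
    rw [Finset.sum_congr rfl (fun l (_ : l ∈ Finset.univ) => Finset.mul_sum
      (Finset.univ : Finset ↥S) (fun j => z j * u (j : Fin n) l) ((Aᴴ * A) k l))]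
    rw [Finset.sum_comm]
    apply Finset.sum_congr rfl
    intro j _
    have e2 : ∑ l, (Aᴴ * A) k l * (z j * u (j : Fin n) l)
        = z j * ∑ l, (Aᴴ * A) k l * u (j : Fin n) l := by
      rw [Finset.mul_sum]; apply Finset.sum_congr rfl; intro l _; ring
    rw [e2]
    have e3 : ∑ l, (Aᴴ * A) k l * u (j : Fin n) l = ((Aᴴ * A) *ᵥ u (j : Fin n)) k := rfl
    rw [e3, heig]
    ring
  -- two expressions for x* M x
  have hq1 : ∑ k, (starRingEnd ℂ) (x k) * ((Aᴴ * A) *ᵥ x) k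
      = ∑ j : ↥S, (starRingEnd ℂ) (z j) * ((f (j : Fin n) : ℂ) * z j) := by
    rw [Finset.sum_congr rfl (fun k (_ : k ∈ Finset.univ) => by rw [hMx k])]
    exact hexp z (fun j => (f (j : Fin n) : ℂ) * z j)
  have hq2 : ∑ k, (starRingEnd ℂ) (x k) * ((Aᴴ * A) *ᵥ x) k
      = ∑ m, (starRingEnd ℂ) (y m) * y m := by
    rw [show (Aᴴ * A) *ᵥ x = Aᴴ *ᵥ y from (Matrix.mulVec_mulVec x Aᴴ A).symm]
    have step : ∀ k, (starRingEnd ℂ) (x k) * (Aᴴ *ᵥ y) k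
        = ∑ m, (starRingEnd ℂ) (A m k * x k) * y m := by
      intro k
      have : (Aᴴ *ᵥ y) k = ∑ m, (starRingEnd ℂ) (A m k) * y m := by
        simp [Matrix.mulVec, dotProduct, Matrix.conjTranspose_apply]
      rw [this, Finset.mul_sum]
      apply Finset.sum_congr rfl
      intro m _
      simp only [_root_.map_mul]
      ring
    rw [Finset.sum_congr rfl (fun k (_ : k ∈ Finset.univ) => step k), Finset.sum_comm]
    apply Finset.sum_congr rfl
    intro m _
    have : ∑ k, (starRingEnd ℂ) (A m k * x k) * y m
        = (starRingEnd ℂ) (∑ k, A m k * x k) * y m := by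
      rw [map_sum, Finset.sum_mul]
    rw [this]
    have : ∑ k, A m k * x k = y m := rfl
    rw [this]
  -- the real identity
  have hreal : ∑ j : ↥S, f (j : Fin n) * Complex.normSq (z j)
      = ∑ m, Complex.normSq (y m) := by
    have hc : ((∑ j : ↥S, f (j : Fin n) * Complex.normSq (z j) : ℝ) : ℂ)
        = ((∑ m, Complex.normSq (y m) : ℝ) : ℂ) := by
      rw [cast1 _ _ y, ← hq2, hq1, Complex.ofReal_sum]
      apply Finset.sum_congr rfl
      intro j _
      rw [Complex.ofReal_mul, Complex.normSq_eq_conj_mul_self]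
      ring
    exact_mod_cast hc
  -- B x = 0, hence y = (A - B) x
  have hBx : B *ᵥ x = 0 := by
    apply hB
    intro α
    have expand : ∑ j, r α j * x j = ∑ j' : ↥S, C α j' * z j' := by
      simp only [hxdef]
      rw [Finset.sum_congr rfl (fun j (_ : j ∈ Finset.univ) => Finset.mul_sum
        (Finset.univ : Finset ↥S) (fun j' => z j' * u (j' : Fin n) j) (r α j))]
      rw [Finset.sum_comm]
      apply Finset.sum_congr rfl
      intro j' _
      simp only [C, Matrix.of_apply]
      rw [Finset.sum_mul]
      apply Finset.sum_congr rfl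
      intro j _
      ring
    rw [expand, hz α]
  have hyAB : y = (A - B) *ᵥ x := by
    rw [Matrix.sub_mulVec, hBx, sub_zero]
  -- entrywise bound
  set T : ℝ := ∑ j, ‖x j‖ with hT
  have hTnonneg : 0 ≤ T := Finset.sum_nonneg fun j _ => norm_nonneg _
  have hybound : ∀ m, Complex.normSq (y m) ≤ (ε * T) ^ 2 := by
    intro m
    have habs : ‖y m‖ ≤ ε * T := by
      rw [hyAB]
      have e : ((A - B) *ᵥ x) m = ∑ j, (A - B) m j * x j := rfl
      rw [e]
      calc ‖∑ j, (A - B) m j * x j‖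
          ≤ ∑ j, ‖(A - B) m j * x j‖ :=
            norm_sum_le _ _
        _ ≤ ∑ j, ε * ‖x j‖ := by
            apply Finset.sum_le_sum
            intro j _
            rw [norm_mul]
            apply mul_le_mul_of_nonneg_right _ (norm_nonneg _)
            simpa using hE m j
        _ = ε * T := by rw [hT, Finset.mul_sum]
    calc Complex.normSq (y m) = ‖y m‖ ^ 2 := (Complex.sq_norm _).symm
      _ ≤ (ε * T) ^ 2 := by
          apply pow_le_pow_left₀ (norm_nonneg _) habs
  have hsum_y : ∑ m, Complex.normSq (y m) ≤ ((n : ℝ) * ε) ^ 2 * Nz := by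
    have h1 : ∑ m, Complex.normSq (y m) ≤ (n : ℝ) * (ε * T) ^ 2 := by
      calc ∑ m, Complex.normSq (y m) ≤ ∑ _m : Fin n, (ε * T) ^ 2 :=
            Finset.sum_le_sum fun m _ => hybound m
        _ = (n : ℝ) * (ε * T) ^ 2 := by
            rw [Finset.sum_const, Finset.card_univ, Fintype.card_fin, nsmul_eq_mul]
    have h2 : T ^ 2 ≤ (n : ℝ) * Nz := by
      have := sq_sum_le_card_mul_sum_sq (s := (Finset.univ : Finset (Fin n)))
        (f := fun j => ‖x j‖)
      rw [Finset.card_univ, Fintype.card_fin] at this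
      calc T ^ 2 ≤ (n : ℝ) * ∑ j, ‖x j‖ ^ 2 := by exact_mod_cast this
        _ = (n : ℝ) * Nz := by
            rw [← hxx]
            congr 1
            exact Finset.sum_congr rfl fun j _ => Complex.sq_norm _
    calc ∑ m, Complex.normSq (y m) ≤ (n : ℝ) * (ε * T) ^ 2 := h1
      _ = (n : ℝ) * ε ^ 2 * T ^ 2 := by ring
      _ ≤ (n : ℝ) * ε ^ 2 * ((n : ℝ) * Nz) := by
          apply mul_le_mul_of_nonneg_left h2
          positivity
      _ = ((n : ℝ) * ε) ^ 2 * Nz := by ring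
  -- final contradiction
  have hj0' : z j0 ≠ 0 := hj0
  have hstrict : ((n : ℝ) * ε) ^ 2 * Nz < ∑ j : ↥S, f (j : Fin n) * Complex.normSq (z j) := by
    rw [hNz, Finset.mul_sum]
    apply Finset.sum_lt_sum
    · intro j _
      exact mul_le_mul_of_nonneg_right (hf (j : Fin n) j.2).le (Complex.normSq_nonneg _)
    · exact ⟨j0, Finset.mem_univ _,
        mul_lt_mul_of_pos_right (hf (j0 : Fin n) j0.2) (Complex.normSq_pos.2 hj0')⟩
  rw [hreal] at hstrict
  linarith



lemma stmt14_taylor {t μ : ℝ} (ht : |t| ≤ μ) (hμ : μ ≤ 1/2) {p : ℕ} (hp : 1 ≤ p) :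
    |Real.exp t - ∑ k ∈ Finset.range p, t ^ k / k.factorial|
      ≤ 2 * μ ^ p / p.factorial := by
  have hμ0 : 0 ≤ μ := le_trans (abs_nonneg t) ht
  have h1 : |t| ≤ 1 := le_trans ht (by linarith)
  have hb := Real.exp_bound h1 (by omega : 0 < p)
  refine hb.trans ?_
  have h2 : |t| ^ p ≤ μ ^ p := pow_le_pow_left₀ (abs_nonneg t) ht p
  have hfp : (0:ℝ) < p.factorial := by exact_mod_cast p.factorial_pos
  have hp' : (1:ℝ) ≤ p := by exact_mod_cast hp
  have h3 : ((p.succ : ℝ)) / (p.factorial * p) ≤ 2 / p.factorial := by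
    rw [div_le_div_iff₀ (by positivity) hfp]
    push_cast
    nlinarith
  calc |t| ^ p * (p.succ / (p.factorial * p))
      ≤ μ ^ p * (2 / p.factorial) := by
        apply mul_le_mul h2 h3 (by positivity) (by positivity)
    _ = 2 * μ ^ p / p.factorial := by ring

/-- bounds on the decreasingly-ordered singular values of `(e^{vᵢ·wⱼ})`. -/
theorem stmt14 (n d : ℕ) (hn : 1 ≤ n) (hd : 1 ≤ d) (v w : Conf n d)
    (μ : ℝ) (hμ : μ = d * linf v * linf w)
    (A : Matrix (Fin n) (Fin n) ℂ)
    (hA : A = Matrix.of fun i j : Fin n => Complex.exp ((⟪v i, w j⟫ : ℝ)))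
    (σ : Fin n → ℝ) (hσanti : Antitone σ)
    (hσ : ∃ e : Fin n ≃ Fin n, ∀ i,
      σ i = Real.sqrt ((Matrix.isHermitian_conjTranspose_mul_self A).eigenvalues (e i))) :
    σ ⟨0, hn⟩ ≤ (n : ℝ) * Real.exp μ ∧
    (μ ≤ 1 / 2 → ∀ p : ℕ, 1 ≤ p → ∀ hL : (p + d - 1).choose d ≤ n - 1,
      σ ⟨(p + d - 1).choose d, by omega⟩ ≤ (2 * n / (Nat.factorial p : ℝ)) * μ ^ p) := by
  classical
  obtain ⟨e, he⟩ := hσ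
  have hcoordv : ∀ (u : Conf n d) (i : Fin n) (s : Fin d), |u i s| ≤ linf u := by
    intro u i s
    have h1 : |u i s| ≤ ⨆ t : Fin d, |u i t| :=
      le_ciSup (f := fun t : Fin d => |u i t|) (Set.Finite.bddAbove (Set.finite_range _)) s
    refine h1.trans ?_
    exact le_ciSup (f := fun i' : Fin n => ⨆ t : Fin d, |u i' t|)
      (Set.Finite.bddAbove (Set.finite_range _)) i
  have hinner : ∀ i j, (⟪v i, w j⟫ : ℝ) = ∑ s, v i s * w j s := by
    intro i j
    simp [PiLp.inner_apply, RCLike.inner_apply, conj_trivial]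
    exact Finset.sum_congr rfl fun _ _ => mul_comm _ _
  have habsinner : ∀ i j, |(⟪v i, w j⟫ : ℝ)| ≤ μ := by
    intro i j
    rw [hinner]
    have hlv : 0 ≤ linf v := le_trans (abs_nonneg _) (hcoordv v ⟨0, hn⟩ ⟨0, hd⟩)
    have hlw : 0 ≤ linf w := le_trans (abs_nonneg _) (hcoordv w ⟨0, hn⟩ ⟨0, hd⟩)
    calc |∑ s, v i s * w j s| ≤ ∑ s, |v i s * w j s| := Finset.abs_sum_le_sum_abs _ _
      _ ≤ ∑ _s : Fin d, linf v * linf w := by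
          apply Finset.sum_le_sum
          intro s _
          rw [abs_mul]
          exact mul_le_mul (hcoordv v i s) (hcoordv w j s) (abs_nonneg _) hlv
      _ = d * linf v * linf w := by
          rw [Finset.sum_const, Finset.card_univ, Fintype.card_fin, nsmul_eq_mul]; ring
      _ = μ := hμ.symm
  have hμ0 : 0 ≤ μ := le_trans (abs_nonneg _) (habsinner ⟨0, hn⟩ ⟨0, hn⟩)
  have heignn : ∀ j, 0 ≤ (Matrix.isHermitian_conjTranspose_mul_self A).eigenvalues j :=
    fun j => Matrix.eigenvalues_conjTranspose_mul_self_nonneg A j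
  have hsq : ∀ i : Fin n,
      σ i ^ 2 = (Matrix.isHermitian_conjTranspose_mul_self A).eigenvalues (e i) := by
    intro i; rw [he i]; exact Real.sq_sqrt (heignn _)
  constructor
  · by_contra hcon
    push_neg at hcon
    have hexp0 : (0:ℝ) ≤ (n:ℝ) * Real.exp μ := by positivity
    refine stmt14_master A 0 (ι := Fin 0) Fin.elim0 (fun x _ => Matrix.zero_mulVec x)
      (Real.exp μ) (Real.exp_nonneg μ) ?_ {e ⟨0, hn⟩} ?_ ?_
    · intro i j
      rw [hA]
      simp only [Matrix.zero_apply, sub_zero, Matrix.of_apply]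
      rw [Complex.norm_exp]
      simp only [Complex.ofReal_re]
      exact Real.exp_le_exp.2 (le_trans (le_abs_self _) (habsinner i j))
    · simp
    · intro j hj
      rw [Finset.mem_singleton] at hj
      subst hj
      rw [← hsq ⟨0, hn⟩]
      nlinarith [hcon, hexp0]
  · intro hμhalf p hp hL
    by_contra hcon
    push_neg at hcon
    set L := (p + d - 1).choose d with hLdef
    have hL1 : L + 1 ≤ n := by omega
    set I := (Finset.range p).biUnion
      (fun k => Finset.piAntidiag (Finset.univ : Finset (Fin d)) k) with hIdef
    set B : Matrix (Fin n) (Fin n) ℂ := Matrix.of fun i j =>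
      ∑ k ∈ Finset.range p, (((⟪v i, w j⟫ : ℝ) : ℂ)) ^ k / (k.factorial : ℂ) with hBdef
    have hdisj : (↑(Finset.range p) : Set ℕ).PairwiseDisjoint
        (fun k => Finset.piAntidiag (Finset.univ : Finset (Fin d)) k) := by
      intro a _ b _ hab
      simp only [Function.onFun]
      rw [Finset.disjoint_left]
      intro α ha hb'
      rw [Finset.mem_piAntidiag] at ha hb'
      exact hab (by rw [← ha.1, ← hb'.1])
    have hdecomp : ∀ i j, B i j = ∑ α ∈ I,
        ((((∑ s, α s).factorial : ℂ))⁻¹ * (Nat.multinomial Finset.univ α : ℂ)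
          * ∏ s, ((v i s : ℝ) : ℂ) ^ α s) * (∏ s, ((w j s : ℝ) : ℂ) ^ α s) := by
      intro i j
      rw [hIdef, Finset.sum_biUnion hdisj]
      simp only [hBdef, Matrix.of_apply]
      apply Finset.sum_congr rfl
      intro k _
      have hkcast : (((⟪v i, w j⟫ : ℝ)) : ℂ) = ∑ s, ((v i s : ℝ) : ℂ) * ((w j s : ℝ) : ℂ) := by
        rw [hinner]; push_cast; rfl
      rw [hkcast, Finset.sum_pow_eq_sum_piAntidiag, Finset.sum_div]
      apply Finset.sum_congr rfl
      intro α hα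
      rw [Finset.mem_piAntidiag] at hα
      rw [show (∑ s, α s) = k from hα.1]
      simp only [mul_pow, Finset.prod_mul_distrib]
      field_simp
    have hcount : I.card ≤ L := stmt14_count d p hd hp
    refine stmt14_master A B (ι := ↥I)
      (fun α j => ∏ s, ((w j s : ℝ) : ℂ) ^ ((α : Fin d → ℕ) s))
      ?_ (2 * μ ^ p / p.factorial) (by positivity) ?_
      (Finset.image (fun i : Fin (L+1) => e (Fin.castLE hL1 i)) Finset.univ) ?_ ?_
    · -- kernel property
      intro x hx
      funext i
      show ∑ j, B i j * x j = 0
      have step : ∀ j, B i j * x j = ∑ α ∈ I,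
          ((((∑ s, α s).factorial : ℂ))⁻¹ * (Nat.multinomial Finset.univ α : ℂ)
            * ∏ s, ((v i s : ℝ) : ℂ) ^ α s) * ((∏ s, ((w j s : ℝ) : ℂ) ^ α s) * x j) := by
        intro j
        rw [hdecomp i j, Finset.sum_mul]
        apply Finset.sum_congr rfl
        intro α _
        ring
      rw [Finset.sum_congr rfl (fun j (_ : j ∈ Finset.univ) => step j), Finset.sum_comm]
      apply Finset.sum_eq_zero
      intro α hα
      rw [← Finset.mul_sum]
      have h0 := hx ⟨α, hα⟩
      simp only at h0
      rw [h0, mul_zero]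
    · -- entrywise bound
      intro i j
      have hAij : A i j = ((Real.exp (⟪v i, w j⟫) : ℝ) : ℂ) := by
        rw [hA]; simp [Complex.ofReal_exp]
      have hBij : B i j = ((∑ k ∈ Finset.range p,
          (⟪v i, w j⟫ : ℝ) ^ k / k.factorial : ℝ) : ℂ) := by
        simp only [hBdef, Matrix.of_apply]
        push_cast
        rfl
      rw [hAij, hBij, ← Complex.ofReal_sub, Complex.norm_real, Real.norm_eq_abs]
      exact stmt14_taylor (habsinner i j) hμhalf hp
    · -- cardinalities
      rw [Fintype.card_coe]
      have h2 : (Finset.image (fun i : Fin (L+1) => e (Fin.castLE hL1 i)) Finset.univ).card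
          = L + 1 := by
        rw [Finset.card_image_of_injective _
          (fun a b hab => (Fin.castLE_injective hL1) (e.injective hab)),
          Finset.card_univ, Fintype.card_fin]
      omega
    · -- eigenvalue lower bounds
      intro j hj
      rw [Finset.mem_image] at hj
      obtain ⟨i, -, rfl⟩ := hj
      have hle : Fin.castLE hL1 i ≤ (⟨L, by omega⟩ : Fin n) := by
        rw [Fin.le_def]
        simpa using Nat.lt_succ_iff.1 i.2
      have h1 : σ (⟨L, by omega⟩ : Fin n) ≤ σ (Fin.castLE hL1 i) := hσanti hle
      have h2 : 2 * (n:ℝ) / p.factorial * μ ^ p < σ (Fin.castLE hL1 i) :=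
        lt_of_lt_of_le hcon h1
      have hc0 : (0:ℝ) ≤ 2 * (n:ℝ) / p.factorial * μ ^ p := by positivity
      rw [← hsq (Fin.castLE hL1 i)]
      have hcc : ((n:ℝ) * (2 * μ ^ p / p.factorial)) = 2 * (n:ℝ) / p.factorial * μ ^ p := by
        ring
      rw [hcc]
      nlinarith [h2, hc0]

end
end

section
/- Let n, d ≥ 1 and w ∈ (ℝ^d)^n. For each fixed θ̃ ∈ ℝ, the function θ ↦ D^N_w(θ, θ̃) is differentiable on ℝ and its derivative satisfies |∂D^N_w(θ, θ̃)/∂θ| ≤ n^{3/2} · ‖w‖ / √e for all θ, θ̃ ∈ ℝ. -/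
open MeasureTheory Complex Matrix
open scoped BigOperators RealInnerProductSpace ENNReal NNReal

noncomputable section

-- AUX LEMMAS --

lemma hadamard_unit_rows (m : ℕ) (A : Matrix (Fin m) (Fin m) ℝ)
    (h : ∀ i, ∑ j, A i j ^ 2 ≤ 1) : |A.det| ≤ 1 := by
  rcases Nat.eq_zero_or_pos m with hm | hm
  · subst hm; simp [Matrix.det_isEmpty]
  set G := A * Aᵀ with hGdef
  have hG : G.PosSemidef := by
    simpa [Matrix.conjTranspose_eq_transpose_of_trivial] using
      Matrix.posSemidef_self_mul_conjTranspose A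
  have hH : G.IsHermitian := hG.1
  set μ := hH.eigenvalues with hμdef
  have hμ0 : ∀ i, 0 ≤ μ i := fun i => hG.eigenvalues_nonneg i
  have hdet : G.det = ∏ i, μ i := by
    simpa using hH.det_eq_prod_eigenvalues
  have htr : G.trace = ∑ i, μ i := by
    rw [hH.trace_eq_sum_eigenvalues]
    simp [hμdef]
  have htr_le : G.trace ≤ (m : ℝ) := by
    have : G.trace = ∑ i, ∑ j, A i j ^ 2 := by
      simp [hGdef, Matrix.trace, Matrix.diag, Matrix.mul_apply, sq]
    rw [this]
    calc ∑ i : Fin m, ∑ j, A i j ^ 2 ≤ ∑ i : Fin m, (1:ℝ) := Finset.sum_le_sum fun i _ => h i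
    _ = m := by simp
  have hprod : ∏ i, μ i ≤ 1 := by
    have hm' : (m:ℝ) ≠ 0 := Nat.cast_ne_zero.mpr hm.ne'
    have hgm := Real.geom_mean_le_arith_mean_weighted Finset.univ (fun _ => (m:ℝ)⁻¹) μ
      (fun _ _ => by positivity)
      (by simp [Finset.sum_const]; field_simp)
      (fun i _ => hμ0 i)
    have h1 : ∑ i, (m:ℝ)⁻¹ * μ i ≤ 1 := by
      rw [← Finset.mul_sum, ← htr]
      calc (m:ℝ)⁻¹ * G.trace ≤ (m:ℝ)⁻¹ * m :=
        mul_le_mul_of_nonneg_left htr_le (by positivity)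
      _ = 1 := by field_simp
    have h2 : ∏ i, μ i = (∏ i, μ i ^ ((m:ℝ)⁻¹)) ^ (m:ℕ) := by
      rw [← Finset.prod_pow]
      refine Finset.prod_congr rfl fun i _ => ?_
      rw [← Real.rpow_natCast (μ i ^ ((m:ℝ)⁻¹)) m, ← Real.rpow_mul (hμ0 i),
        inv_mul_cancel₀ hm', Real.rpow_one]
    rw [h2]
    exact pow_le_one₀ (Finset.prod_nonneg fun i _ => Real.rpow_nonneg (hμ0 i) _)
      (hgm.trans h1)
  have hsq : A.det ^ 2 ≤ 1 := by
    have : A.det ^ 2 = G.det := by rw [hGdef, Matrix.det_mul, Matrix.det_transpose, sq]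
    rw [this, hdet]; exact hprod
  exact abs_le_one_iff_mul_self_le_one.mpr (by nlinarith)

lemma det_inner_le_one {E : Type*} [NormedAddCommGroup E] [InnerProductSpace ℝ E]
    {m : ℕ} (v y : Fin m → E) (hv : ∀ i, ‖v i‖ ≤ 1) (hy : ∀ j, ‖y j‖ ≤ 1) :
    |(Matrix.of fun i j => (⟪v i, y j⟫ : ℝ)).det| ≤ 1 := by
  by_cases hli : LinearIndependent ℝ v
  · set V := Submodule.span ℝ (Set.range v) with hVdef
    haveI : FiniteDimensional ℝ V := FiniteDimensional.span_of_finite ℝ (Set.finite_range v)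
    have hrank : Module.finrank ℝ V = m := by
      rw [finrank_span_eq_card hli, Fintype.card_fin]
    let b := (stdOrthonormalBasis ℝ V).reindex (finCongr hrank)
    let p : Fin m → V := fun j => V.orthogonalProjectionOnto (y j)
    let v' : Fin m → V := fun i => ⟨v i, Submodule.subset_span (Set.mem_range_self i)⟩
    have hkey : ∀ i j, (⟪v i, y j⟫ : ℝ) = @inner ℝ V _ (v' i) (p j) := by
      intro i j
      have h0 : ⟪y j - (V.orthogonalProjectionOnto (y j) : E), v i⟫ = 0 :=
        V.starProjection_inner_eq_zero (y j) (v i)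
          (Submodule.subset_span (Set.mem_range_self i))
      rw [inner_sub_left, sub_eq_zero] at h0
      calc (⟪v i, y j⟫ : ℝ) = ⟪y j, v i⟫ := real_inner_comm _ _
      _ = ⟪((p j : E)), v i⟫ := h0
      _ = ⟪v i, ((p j : E))⟫ := real_inner_comm _ _
      _ = @inner ℝ V _ (v' i) (p j) := (Submodule.coe_inner V (v' i) (p j)).symm
    set A : Matrix (Fin m) (Fin m) ℝ := Matrix.of fun i l => b.repr (v' i) l with hA
    set B : Matrix (Fin m) (Fin m) ℝ := Matrix.of fun j l => b.repr (p j) l with hB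
    have hinner : ∀ (x z : V), @inner ℝ V _ x z = ∑ l, b.repr x l * b.repr z l := by
      intro x z
      have h1 : @inner ℝ V _ x z = @inner ℝ _ _ (b.repr x) (b.repr z) :=
        (b.repr.inner_map_map x z).symm
      rw [h1, PiLp.inner_apply]
      simp [RCLike.inner_apply, mul_comm]
    have hnormsq : ∀ (x : V), ∑ l, (b.repr x l) ^ 2 = ‖x‖ ^ 2 := by
      intro x
      rw [← @real_inner_self_eq_norm_sq, hinner]
      simp [sq]
    have hM : (Matrix.of fun i j => (⟪v i, y j⟫ : ℝ)) = A * Bᵀ := by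
      ext i j
      simp only [Matrix.of_apply, Matrix.mul_apply, Matrix.transpose_apply, hA, hB]
      rw [hkey i j, hinner]
    have hBd : |B.det| ≤ 1 := by
      apply hadamard_unit_rows
      intro j
      have hle : ‖p j‖ ≤ 1 := by
        have h1 := (V.orthogonalProjectionOnto).le_opNorm (y j)
        have h2 := Submodule.orthogonalProjectionOnto_norm_le V
        have h3 := hy j
        have h4 := norm_nonneg (y j)
        have h5 := norm_nonneg (V.orthogonalProjectionOnto : E →L[ℝ] V)
        calc ‖p j‖ ≤ ‖(V.orthogonalProjectionOnto : E →L[ℝ] V)‖ * ‖y j‖ := h1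
        _ ≤ 1 := by nlinarith
      simp only [hB, Matrix.of_apply]
      rw [hnormsq]
      nlinarith [norm_nonneg (p j)]
    have hAd : |A.det| ≤ 1 := by
      apply hadamard_unit_rows
      intro i
      simp only [hA, Matrix.of_apply]
      rw [hnormsq]
      have hvv : ‖v' i‖ = ‖v i‖ := rfl
      nlinarith [norm_nonneg (v' i), hv i]
    rw [hM, Matrix.det_mul, Matrix.det_transpose, abs_mul]
    calc |A.det| * |B.det| ≤ 1 * 1 :=
        mul_le_mul hAd hBd (abs_nonneg _) (le_trans (abs_nonneg _) hAd)
    _ = 1 := by ring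
  · obtain ⟨g, hsum, i0, hg0⟩ := Fintype.not_linearIndependent_iff.mp hli
    have hdet : (Matrix.of fun i j => (⟪v i, y j⟫ : ℝ)).det = 0 := by
      rw [← Matrix.exists_vecMul_eq_zero_iff]
      refine ⟨g, fun hgz => hg0 (by rw [hgz]; rfl), ?_⟩
      funext j
      simp only [Matrix.vecMul, dotProduct, Matrix.of_apply, Pi.zero_apply]
      have : ∑ i, g i * ⟪v i, y j⟫ = ⟪∑ i, g i • v i, y j⟫ := by
        rw [sum_inner]
        exact Finset.sum_congr rfl fun i _ => (real_inner_smul_left (v i) (y j) (g i)).symm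
      rw [this, hsum, inner_zero_left]
    rw [hdet]; simp

lemma gauss_sq_integrable {d : ℕ} (c : Vec d) :
    Integrable (fun x : Vec d => Real.exp (-2 * ‖x - c‖ ^ 2)) := by
  have h : Integrable (fun x : Vec d => Real.exp (-2 * ‖x‖ ^ 2)) := by
    have h2 := (GaussianFourier.integrable_cexp_neg_mul_sq_norm_add (V := Vec d)
      (b := (2 : ℂ)) (by norm_num) 0 0).norm
    apply h2.congr
    filter_upwards with x
    rw [Complex.norm_exp]
    congr 1
    simp [Complex.add_re, Complex.mul_re, ← Complex.ofReal_pow]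
  exact h.comp_sub_right c

lemma gauss_norm_identity {d : ℕ} (a b x : Vec d) :
    ‖x - a‖ ^ 2 + ‖x - b‖ ^ 2
      = 2 * ‖x - (1/2 : ℝ) • (a + b)‖ ^ 2 + ‖a - b‖ ^ 2 / 2 := by
  have e1 := @norm_sub_sq_real (Vec d) _ _ x a
  have e2 := @norm_sub_sq_real (Vec d) _ _ x b
  have e3 := @norm_sub_sq_real (Vec d) _ _ x ((1/2 : ℝ) • (a + b))
  have e4 := @norm_add_sq_real (Vec d) _ _ a b
  have e5 := @norm_sub_sq_real (Vec d) _ _ a b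
  have e6 : (⟪x, (1/2 : ℝ) • (a + b)⟫ : ℝ) = (1/2) * (⟪x, a⟫ + ⟪x, b⟫) := by
    rw [real_inner_smul_right, inner_add_right]
  have e7 : ‖(1/2 : ℝ) • (a + b)‖ ^ 2 = (1/2) ^ 2 * ‖a + b‖ ^ 2 := by
    rw [norm_smul]
    norm_num
    ring
  rw [e1, e2, e3, e6, e7, e4, e5]
  ring

/-- key lemma: determinant of the Gaussian cross-Gram matrix is at most 1. -/
lemma gauss_det_le_one (d m : ℕ) (u v : Fin m → Vec d) :
    |(Matrix.of fun i j => Real.exp (-‖u i - v j‖ ^ 2 / 2)).det| ≤ 1 := by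
  classical
  set ψ : Vec d → Vec d → ℝ := fun a x => Real.exp (-‖x - a‖ ^ 2) with hψ
  have hψcont : ∀ a, Continuous (ψ a) := by
    intro a; fun_prop
  have hψprod : ∀ a b x, ψ a x * ψ b x
      = Real.exp (-‖a - b‖ ^ 2 / 2) * Real.exp (-2 * ‖x - (1/2 : ℝ) • (a + b)‖ ^ 2) := by
    intro a b x
    rw [hψ]
    simp only
    rw [← Real.exp_add, ← Real.exp_add]
    congr 1
    have := gauss_norm_identity a b x
    linarith
  have hmem : ∀ a, MemLp (ψ a) 2 (volume : Measure (Vec d)) := by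
    intro a
    rw [memLp_two_iff_integrable_sq ((hψcont a).aestronglyMeasurable)]
    apply (gauss_sq_integrable a).congr
    filter_upwards with x
    rw [hψ]
    simp only
    rw [← Real.exp_nat_mul]
    norm_num
  set J : ℝ := ∫ x : Vec d, Real.exp (-2 * ‖x‖ ^ 2) with hJ
  have hJpos : 0 < J := by
    rw [hJ, ]
    rw [integral_pos_iff_support_of_nonneg (fun x => (Real.exp_pos _).le)
      (by simpa using gauss_sq_integrable (0 : Vec d))]
    have : (Function.support fun x : Vec d => Real.exp (-2 * ‖x‖ ^ 2)) = Set.univ := by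
      ext x; simp [Function.support, (Real.exp_pos _).ne']
    rw [this]
    exact isOpen_univ.measure_pos volume ⟨0, trivial⟩
  have hprodint : ∀ a b : Vec d, Integrable (fun x => ψ a x * ψ b x) := by
    intro a b
    have := (gauss_sq_integrable ((1/2 : ℝ) • (a + b))).const_mul (Real.exp (-‖a - b‖ ^ 2 / 2))
    apply this.congr
    filter_upwards with x
    rw [hψprod]
  have hkernel : ∀ a b : Vec d, ∫ x, ψ a x * ψ b x = Real.exp (-‖a - b‖ ^ 2 / 2) * J := by
    intro a b
    have h1 : ∫ x, ψ a x * ψ b x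
        = ∫ x, Real.exp (-‖a - b‖ ^ 2 / 2) * Real.exp (-2 * ‖x - (1/2 : ℝ) • (a + b)‖ ^ 2) := by
      congr 1; funext x; exact hψprod a b x
    rw [h1, integral_const_mul]
    congr 1
    rw [hJ]
    exact integral_sub_right_eq_self (fun x : Vec d => Real.exp (-2 * ‖x‖ ^ 2)) _
  set f : Vec d → Lp ℝ 2 (volume : Measure (Vec d)) := fun a => (hmem a).toLp (ψ a) with hf
  have hinner : ∀ a b : Vec d, (⟪f a, f b⟫ : ℝ) = Real.exp (-‖a - b‖ ^ 2 / 2) * J := by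
    intro a b
    rw [L2.inner_def, ← hkernel a b]
    apply integral_congr_ae
    filter_upwards [(hmem a).coeFn_toLp, (hmem b).coeFn_toLp] with x h1 h2
    rw [hf]
    simp only
    rw [h1, h2]
    simp [RCLike.inner_apply, mul_comm]
  have hnorm : ∀ a : Vec d, ‖f a‖ = Real.sqrt J := by
    intro a
    have h1 : (⟪f a, f a⟫ : ℝ) = J := by
      rw [hinner a a]; simp
    have h2 : ‖f a‖ ^ 2 = J := by rw [← @real_inner_self_eq_norm_sq, h1]
    rw [← h2]
    exact (Real.sqrt_sq (norm_nonneg _)).symm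
  set c : ℝ := (Real.sqrt J)⁻¹ with hc
  have hcpos : 0 < Real.sqrt J := Real.sqrt_pos.mpr hJpos
  have hMeq : (Matrix.of fun i j => Real.exp (-‖u i - v j‖ ^ 2 / 2))
      = Matrix.of fun i j => (⟪c • f (u i), c • f (v j)⟫ : ℝ) := by
    ext i j
    simp only [Matrix.of_apply]
    rw [real_inner_smul_left, real_inner_smul_right, hinner, hc]
    rw [show (Real.sqrt J)⁻¹ * ((Real.sqrt J)⁻¹ * (Real.exp (-‖u i - v j‖ ^ 2 / 2) * J))
        = Real.exp (-‖u i - v j‖ ^ 2 / 2) * ((Real.sqrt J * Real.sqrt J)⁻¹ * J) from by ring,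
      Real.mul_self_sqrt hJpos.le, inv_mul_cancel₀ hJpos.ne', mul_one]
  rw [hMeq]
  apply det_inner_le_one
  · intro i
    rw [norm_smul, hnorm, hc, Real.norm_eq_abs, _root_.abs_of_nonneg (inv_nonneg.mpr hcpos.le),
      inv_mul_cancel₀ hcpos.ne']
  · intro j
    rw [norm_smul, hnorm, hc, Real.norm_eq_abs, _root_.abs_of_nonneg (inv_nonneg.mpr hcpos.le),
      inv_mul_cancel₀ hcpos.ne']

lemma hasDerivAt_det_aux {n : ℕ} (M : ℝ → Matrix (Fin n) (Fin n) ℝ)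
    (M' : Matrix (Fin n) (Fin n) ℝ) (θ : ℝ)
    (h : ∀ i j, HasDerivAt (fun t => M t i j) (M' i j) θ) :
    HasDerivAt (fun t => (M t).det)
      (∑ k, (Matrix.updateCol (M θ) k (fun i => M' i k)).det) θ := by
  classical
  have h1 : (fun t => (M t).det)
      = fun t => ∑ σ : Equiv.Perm (Fin n), ((Equiv.Perm.sign σ : ℤ) : ℝ) * ∏ i, M t (σ i) i := by
    funext t; rw [Matrix.det_apply']
  rw [h1]
  have h2 : HasDerivAt
      (fun t => ∑ σ : Equiv.Perm (Fin n), ((Equiv.Perm.sign σ : ℤ) : ℝ) * ∏ i, M t (σ i) i)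
      (∑ σ : Equiv.Perm (Fin n), ((Equiv.Perm.sign σ : ℤ) : ℝ) *
        ∑ k, (∏ j ∈ Finset.univ.erase k, M θ (σ j) j) • M' (σ k) k) θ :=
    HasDerivAt.fun_sum fun σ _ =>
      (HasDerivAt.fun_finsetProd fun k _ => h (σ k) k).const_mul _
  convert h2 using 1
  have h3 : ∀ (k : Fin n) (σ : Equiv.Perm (Fin n)),
      (∏ i, (Matrix.updateCol (M θ) k (fun i => M' i k)) (σ i) i)
        = M' (σ k) k * ∏ j ∈ Finset.univ.erase k, M θ (σ j) j := by
    intro k σ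
    rw [← Finset.mul_prod_erase Finset.univ _ (Finset.mem_univ k)]
    congr 1
    · simp [Matrix.updateCol_apply]
    · exact Finset.prod_congr rfl fun j hj => by
        simp [Matrix.updateCol_apply, (Finset.mem_erase.mp hj).1]
  calc ∑ k, ((M θ).updateCol k fun i => M' i k).det
      = ∑ k, ∑ σ : Equiv.Perm (Fin n), ((Equiv.Perm.sign σ : ℤ) : ℝ) *
          (M' (σ k) k * ∏ j ∈ Finset.univ.erase k, M θ (σ j) j) := by
        refine Finset.sum_congr rfl fun k _ => ?_
        rw [Matrix.det_apply']
        exact Finset.sum_congr rfl fun σ _ => by rw [h3]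
  _ = ∑ σ : Equiv.Perm (Fin n), ∑ k, ((Equiv.Perm.sign σ : ℤ) : ℝ) *
          (M' (σ k) k * ∏ j ∈ Finset.univ.erase k, M θ (σ j) j) := Finset.sum_comm
  _ = ∑ σ : Equiv.Perm (Fin n), ((Equiv.Perm.sign σ : ℤ) : ℝ) *
        ∑ k, (∏ j ∈ Finset.univ.erase k, M θ (σ j) j) • M' (σ k) k := by
        refine Finset.sum_congr rfl fun σ _ => ?_
        rw [Finset.mul_sum]
        exact Finset.sum_congr rfl fun k _ => by rw [smul_eq_mul]; ring

lemma entry_hasDerivAt {d : ℕ} (wi vj : Vec d) (θ : ℝ) :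
    HasDerivAt (fun t : ℝ => Real.exp (-‖t • wi - vj‖ ^ 2 / 2))
      (-(⟪wi, θ • wi - vj⟫ : ℝ) * Real.exp (-‖θ • wi - vj‖ ^ 2 / 2)) θ := by
  set a := ‖wi‖ ^ 2 with ha
  set b := (⟪wi, vj⟫ : ℝ) with hb
  set cc := ‖vj‖ ^ 2 with hcc
  have hq : ∀ t : ℝ, -‖t • wi - vj‖ ^ 2 / 2 = -(t^2*a - 2*b*t + cc)/2 := by
    intro t
    rw [@norm_sub_sq_real, norm_smul, real_inner_smul_left, mul_pow, Real.norm_eq_abs, _root_.sq_abs]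
    ring
  have hval : -(⟪wi, θ • wi - vj⟫ : ℝ) = -(θ * a - b) := by
    rw [inner_sub_right, real_inner_smul_right, real_inner_self_eq_norm_sq]
  have hpoly : HasDerivAt (fun t : ℝ => -(t^2*a - 2*b*t + cc)/2) (-(θ*a - b)) θ := by
    have h1 : HasDerivAt (fun t : ℝ => t^2) (2*θ) θ := by
      simpa using hasDerivAt_pow 2 θ
    have h2 : HasDerivAt (fun t : ℝ => t^2*a - 2*b*t + cc) (2*θ*a - 2*b) θ := by
      have h3 := ((h1.mul_const a).sub ((hasDerivAt_id θ).const_mul (2*b))).add_const cc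
      simpa using h3
    have h4 : HasDerivAt (fun t : ℝ => -(t^2*a - 2*b*t + cc)/2) (-(2*θ*a - 2*b)/2) θ :=
      (h2.neg).div_const 2
    convert h4 using 1
    ring
  have hfun : (fun t : ℝ => Real.exp (-‖t • wi - vj‖ ^ 2 / 2))
      = fun t : ℝ => Real.exp (-(t^2*a - 2*b*t + cc)/2) := by
    funext t; rw [hq]
  rw [hfun, hval]
  have h5 := hpoly.exp
  convert h5 using 1
  rw [hq θ]
  ring

lemma mul_exp_le_exp_neg_half (r : ℝ) : r * Real.exp (-r^2/2) ≤ Real.exp (-(1:ℝ)/2) := by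
  have h2 : r ≤ Real.exp ((r^2-1)/2) := by
    nlinarith [Real.add_one_le_exp ((r^2-1)/2), sq_nonneg (r-1)]
  calc r * Real.exp (-r^2/2) ≤ Real.exp ((r^2-1)/2) * Real.exp (-r^2/2) :=
      mul_le_mul_of_nonneg_right h2 (Real.exp_pos _).le
  _ = Real.exp (-(1:ℝ)/2) := by rw [← Real.exp_add]; congr 1; ring

lemma sqrt_exp_one : Real.sqrt (Real.exp 1) = Real.exp ((1:ℝ)/2) := by
  rw [show Real.exp 1 = Real.exp ((1:ℝ)/2) * Real.exp ((1:ℝ)/2) by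
    rw [← Real.exp_add]; norm_num]
  exact Real.sqrt_mul_self (Real.exp_pos _).le


theorem stmt16 (n d : ℕ) (hn : 1 ≤ n) (hd : 1 ≤ d) (w : Conf n d) :
    (∀ θ' : ℝ, Differentiable ℝ (fun θ => DN w θ θ')) ∧
    ∀ θ θ' : ℝ, |deriv (fun θ => DN w θ θ') θ|
      ≤ (n : ℝ) ^ ((3 : ℝ) / 2) * confNorm w / Real.sqrt (Real.exp 1) := by
  obtain ⟨m, rfl⟩ : ∃ m, n = m + 1 := ⟨n - 1, (Nat.succ_pred_eq_of_pos hn).symm⟩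
  have key : ∀ (θ' θ : ℝ), HasDerivAt (fun t => DN w t θ')
      (∑ k, (Matrix.updateCol
        (Matrix.of fun i j : Fin (m+1) => Real.exp (-‖θ • w i - θ' • w j‖ ^ 2 / 2)) k
        (fun i => -(⟪w i, θ • w i - θ' • w k⟫ : ℝ) *
          Real.exp (-‖θ • w i - θ' • w k‖ ^ 2 / 2))).det) θ := by
    intro θ' θ
    have h := hasDerivAt_det_aux
      (fun t => Matrix.of fun i j : Fin (m+1) => Real.exp (-‖t • w i - θ' • w j‖ ^ 2 / 2))
      (Matrix.of fun i j : Fin (m+1) => -(⟪w i, θ • w i - θ' • w j⟫ : ℝ) *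
        Real.exp (-‖θ • w i - θ' • w j‖ ^ 2 / 2)) θ
      (fun i j => entry_hasDerivAt (w i) (θ' • w j) θ)
    exact h
  refine ⟨fun θ' θ => (key θ' θ).differentiableAt, ?_⟩
  intro θ θ'
  rw [(key θ' θ).deriv]
  set M := Matrix.of fun i j : Fin (m+1) => Real.exp (-‖θ • w i - θ' • w j‖ ^ 2 / 2) with hM
  -- per-column bound
  have hk : ∀ k : Fin (m+1),
      |(Matrix.updateCol M k (fun i => -(⟪w i, θ • w i - θ' • w k⟫ : ℝ) *
          Real.exp (-‖θ • w i - θ' • w k‖ ^ 2 / 2))).det|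
        ≤ ∑ i, ‖w i‖ * Real.exp (-(1:ℝ)/2) := by
    intro k
    set N := Matrix.updateCol M k (fun i => -(⟪w i, θ • w i - θ' • w k⟫ : ℝ) *
        Real.exp (-‖θ • w i - θ' • w k‖ ^ 2 / 2)) with hN
    rw [Matrix.det_succ_column N k]
    refine (Finset.abs_sum_le_sum_abs _ _).trans ?_
    refine Finset.sum_le_sum fun i _ => ?_
    rw [abs_mul, abs_mul]
    have h1 : |(-1 : ℝ) ^ ((i : ℕ) + (k : ℕ))| = 1 := by
      rw [_root_.abs_pow, _root_.abs_neg, _root_.abs_one, one_pow]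
    have h2 : |N i k| ≤ ‖w i‖ * Real.exp (-(1:ℝ)/2) := by
      have hNik : N i k = -(⟪w i, θ • w i - θ' • w k⟫ : ℝ) *
          Real.exp (-‖θ • w i - θ' • w k‖ ^ 2 / 2) := by
        rw [hN]; simp [Matrix.updateCol_apply]
      rw [hNik, abs_mul, abs_neg]
      have h3 : |Real.exp (-‖θ • w i - θ' • w k‖ ^ 2 / 2)|
          = Real.exp (-‖θ • w i - θ' • w k‖ ^ 2 / 2) := abs_of_pos (Real.exp_pos _)
      rw [h3]
      calc |(⟪w i, θ • w i - θ' • w k⟫ : ℝ)| * Real.exp (-‖θ • w i - θ' • w k‖ ^ 2 / 2)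
          ≤ (‖w i‖ * ‖θ • w i - θ' • w k‖) * Real.exp (-‖θ • w i - θ' • w k‖ ^ 2 / 2) :=
            mul_le_mul_of_nonneg_right (abs_real_inner_le_norm _ _) (Real.exp_pos _).le
      _ = ‖w i‖ * (‖θ • w i - θ' • w k‖ * Real.exp (-‖θ • w i - θ' • w k‖ ^ 2 / 2)) := by ring
      _ ≤ ‖w i‖ * Real.exp (-(1:ℝ)/2) :=
            mul_le_mul_of_nonneg_left (mul_exp_le_exp_neg_half _) (norm_nonneg _)
    have h4 : |(N.submatrix i.succAbove k.succAbove).det| ≤ 1 := by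
      have heq : N.submatrix i.succAbove k.succAbove
          = Matrix.of fun i' j' : Fin m =>
              Real.exp (-‖(fun i' => θ • w (i.succAbove i')) i'
                - (fun j' => θ' • w (k.succAbove j')) j'‖ ^ 2 / 2) := by
        ext i' j'
        simp only [Matrix.submatrix_apply, hN, hM, Matrix.updateCol_apply, Matrix.of_apply,
          Fin.succAbove_ne k j', if_false]
      rw [heq]
      exact gauss_det_le_one d m _ _
    calc |(-1 : ℝ) ^ ((i:ℕ) + (k:ℕ))| * |N i k| * |(N.submatrix i.succAbove k.succAbove).det|
        ≤ 1 * (‖w i‖ * Real.exp (-(1:ℝ)/2)) * 1 := by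
          apply mul_le_mul
          · apply mul_le_mul (le_of_eq h1) h2 (abs_nonneg _) zero_le_one
          · exact h4
          · exact abs_nonneg _
          · positivity
    _ = ‖w i‖ * Real.exp (-(1:ℝ)/2) := by ring
  -- sum of norms bound
  have hsumw : ∑ i, ‖w i‖ ≤ Real.sqrt ((m+1 : ℕ)) * confNorm w := by
    have h1 : (∑ i, ‖w i‖) ^ 2 ≤ ((m+1 : ℕ) : ℝ) * ∑ i, ‖w i‖ ^ 2 := by
      simpa using _root_.sq_sum_le_card_mul_sum_sq (s := (Finset.univ : Finset (Fin (m+1))))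
        (f := fun i => ‖w i‖)
    have h2 : ∑ i, ‖w i‖ ≤ Real.sqrt (((m+1 : ℕ) : ℝ) * ∑ i, ‖w i‖ ^ 2) := by
      rw [show (∑ i, ‖w i‖) = Real.sqrt ((∑ i, ‖w i‖)^2) from
        (Real.sqrt_sq (Finset.sum_nonneg fun i _ => norm_nonneg _)).symm]
      exact Real.sqrt_le_sqrt h1
    rw [Real.sqrt_mul (by positivity)] at h2
    exact h2
  have hE : Real.exp (-(1:ℝ)/2) = (Real.sqrt (Real.exp 1))⁻¹ := by
    rw [sqrt_exp_one, ← Real.exp_neg]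
    norm_num
  have hn32 : ((m+1 : ℕ) : ℝ) ^ ((3:ℝ)/2) = ((m+1 : ℕ) : ℝ) * Real.sqrt ((m+1 : ℕ) : ℝ) := by
    have hpos : (0:ℝ) < ((m+1 : ℕ) : ℝ) := by positivity
    rw [Real.sqrt_eq_rpow, show (3:ℝ)/2 = 1 + 1/2 by norm_num, Real.rpow_add hpos,
      Real.rpow_one]
  calc |∑ k : Fin (m+1), (Matrix.updateCol M k (fun i => -(⟪w i, θ • w i - θ' • w k⟫ : ℝ) *
          Real.exp (-‖θ • w i - θ' • w k‖ ^ 2 / 2))).det|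
      ≤ ∑ k : Fin (m+1), |(Matrix.updateCol M k
          (fun i => -(⟪w i, θ • w i - θ' • w k⟫ : ℝ) *
          Real.exp (-‖θ • w i - θ' • w k‖ ^ 2 / 2))).det| := Finset.abs_sum_le_sum_abs _ _
  _ ≤ ∑ _k : Fin (m+1), ∑ i, ‖w i‖ * Real.exp (-(1:ℝ)/2) :=
        Finset.sum_le_sum fun k _ => hk k
  _ = ((m+1 : ℕ) : ℝ) * ((∑ i, ‖w i‖) * Real.exp (-(1:ℝ)/2)) := by
        rw [Finset.sum_const, Finset.card_univ, Fintype.card_fin, nsmul_eq_mul,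
          ← Finset.sum_mul]
  _ ≤ ((m+1 : ℕ) : ℝ) * ((Real.sqrt ((m+1 : ℕ)) * confNorm w) * Real.exp (-(1:ℝ)/2)) := by
        apply mul_le_mul_of_nonneg_left _ (by positivity)
        exact mul_le_mul_of_nonneg_right hsumw (Real.exp_pos _).le
  _ = ((m+1 : ℕ) : ℝ) ^ ((3:ℝ)/2) * confNorm w / Real.sqrt (Real.exp 1) := by
        rw [hn32, hE, div_eq_mul_inv]
        ring

end
end

section
/- Let ε > 0 and y ∈ ℝ. Then the absolutely convergent improper integral satisfies −(1/π) ∫_ε^∞ cos(θ y)/θ² dθ = |y|/2 − cos(ε y)/(π ε) − (y/π)·Si(ε y), where Si(u) = ∫_0^u (sin s)/s ds. Consequently, the low-frequency remainder of ReLU satisfies | ReLU(y) − ( −(1/π) ∫_ε^∞ cos(θ y)/θ² dθ ) − y/2 − 1/(π ε) | ≤ (3/(2π)) · ε · y², where ReLU(y) = max(y, 0). -/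
open MeasureTheory Complex Matrix
open scoped BigOperators RealInnerProductSpace ENNReal NNReal

noncomputable section

section Stmt19Helpers
open MeasureTheory Set Filter Real
open scoped Topology

namespace Stmt19Aux

noncomputable def Gaux (b : ℝ) : ℝ :=
  ∫ t in Set.Ioi (0:ℝ), Real.exp (-(b*t)) * (t * Real.sin b + Real.cos b) / (1+t^2)

noncomputable def Siaux (x : ℝ) : ℝ := ∫ s in (0:ℝ)..x, Real.sin s / s

lemma sinc_abs_le_one (s : ℝ) : |Real.sin s / s| ≤ 1 := by
  rcases eq_or_ne s 0 with rfl | hs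
  · simp
  · rw [abs_div]
    rw [div_le_one (abs_pos.mpr hs)]
    exact Real.abs_sin_le_abs

lemma sinc_intervalIntegrable (a b : ℝ) :
    IntervalIntegrable (fun s => Real.sin s / s) volume a b := by
  rw [intervalIntegrable_iff]
  have : IsFiniteMeasure (volume.restrict (Set.uIoc a b)) :=
    ⟨by rw [Measure.restrict_apply_univ]; exact measure_Ioc_lt_top⟩
  apply Integrable.mono' (g := fun _ : ℝ => (1:ℝ)) (integrable_const 1)
  · exact (Real.measurable_sin.div measurable_id).aestronglyMeasurable
  · exact Filter.Eventually.of_forall fun s => by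
      rw [Real.norm_eq_abs]; exact sinc_abs_le_one s

lemma Si_abs_le (x : ℝ) : |Siaux x| ≤ |x| := by
  have := intervalIntegral.norm_integral_le_of_norm_le_const
    (C := 1) (f := fun s => Real.sin s / s) (a := (0:ℝ)) (b := x)
    (fun s _ => by rw [Real.norm_eq_abs]; exact sinc_abs_le_one s)
  simpa [Siaux, Real.norm_eq_abs] using this

lemma hasDerivAt_F (t θ : ℝ) :
    HasDerivAt (fun θ => -(Real.exp (-(θ*t)) * (t * Real.sin θ + Real.cos θ)) / (1+t^2))
      (Real.exp (-(θ*t)) * Real.sin θ) θ := by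
  have ht : (1:ℝ) + t^2 ≠ 0 := by positivity
  have h1 : HasDerivAt (fun θ : ℝ => -(θ*t)) (-t) θ := by
    simpa using ((hasDerivAt_id θ).mul_const t).fun_neg
  have h2 : HasDerivAt (fun θ : ℝ => Real.exp (-(θ*t))) (Real.exp (-(θ*t)) * (-t)) θ := h1.exp
  have h3 : HasDerivAt (fun θ : ℝ => t * Real.sin θ + Real.cos θ)
      (t * Real.cos θ + (-Real.sin θ)) θ :=
    ((Real.hasDerivAt_sin θ).const_mul t).add (Real.hasDerivAt_cos θ)
  have h4 := ((h2.mul h3).fun_neg).div_const ((1:ℝ)+t^2)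
  refine h4.congr_deriv ?_
  field_simp
  ring

lemma integral_exp_neg_mul {b : ℝ} (hb : 0 < b) :
    ∫ t in Set.Ioi (0:ℝ), Real.exp (-(b*t)) = 1/b := by
  have hder : ∀ x ∈ Set.Ici (0:ℝ),
      HasDerivAt (fun t : ℝ => -Real.exp (-(b*t)) / b) (Real.exp (-(b*x))) x := by
    intro x _
    have h1 : HasDerivAt (fun t : ℝ => -(b*t)) (-b) x := by
      simpa using ((hasDerivAt_id x).const_mul b).fun_neg
    have := (h1.exp.fun_neg).div_const b
    refine this.congr_deriv ?_
    field_simp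
  have hint : IntegrableOn (fun t : ℝ => Real.exp (-(b*t))) (Set.Ioi (0:ℝ)) := by
    have := exp_neg_integrableOn_Ioi 0 hb
    simpa [neg_mul] using this
  have htend : Tendsto (fun t : ℝ => -Real.exp (-(b*t)) / b) atTop (𝓝 0) := by
    have : Tendsto (fun t : ℝ => -(b*t)) atTop atBot := by
      have := tendsto_id (α := ℝ) |>.const_mul_atTop_of_neg (neg_neg_iff_pos.mpr hb)
      exact this.congr (by intro x; simp [neg_mul])
    have := (Real.tendsto_exp_atBot.comp this).neg.div_const b
    simpa using this
  have := MeasureTheory.integral_Ioi_of_hasDerivAt_of_tendsto'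
    (f := fun t : ℝ => -Real.exp (-(b*t)) / b) hder hint htend
  simp at this
  rw [this]
  ring

lemma exp_integrableOn {b : ℝ} (hb : 0 < b) :
    IntegrableOn (fun t : ℝ => Real.exp (-(b*t))) (Set.Ioi (0:ℝ)) := by
  simpa [neg_mul] using exp_neg_integrableOn_Ioi 0 hb

lemma interval_eval (t a T : ℝ) :
    ∫ θ in a..T, Real.exp (-(θ*t)) * Real.sin θ
      = -(Real.exp (-(T*t)) * (t * Real.sin T + Real.cos T)) / (1+t^2)
        - (-(Real.exp (-(a*t)) * (t * Real.sin a + Real.cos a)) / (1+t^2)) :=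
  intervalIntegral.integral_eq_sub_of_hasDerivAt (fun θ _ => hasDerivAt_F t θ)
    (Continuous.intervalIntegrable (by continuity) a T)

lemma inner_t {θ : ℝ} (hθ : 0 < θ) :
    ∫ t in Set.Ioi (0:ℝ), Real.exp (-(θ*t)) * Real.sin θ = Real.sin θ / θ := by
  rw [MeasureTheory.integral_mul_const, integral_exp_neg_mul hθ]
  ring

lemma Gaux_integrand_integrable {b : ℝ} (hb : 0 < b) :
    IntegrableOn (fun t : ℝ => Real.exp (-(b*t)) * (t * Real.sin b + Real.cos b) / (1+t^2))
      (Set.Ioi (0:ℝ)) := by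
  apply Integrable.mono' ((exp_integrableOn hb).const_mul 2)
  · apply Continuous.aestronglyMeasurable
    have h : ∀ t : ℝ, (1:ℝ) + t^2 ≠ 0 := fun t => by positivity
    exact (Continuous.mul (by continuity) (by continuity)).div (by continuity) h
  · filter_upwards [ae_restrict_mem measurableSet_Ioi] with t ht
    have ht0 : (0:ℝ) < t := ht
    have h1 : (0:ℝ) < 1 + t^2 := by positivity
    rw [Real.norm_eq_abs, abs_div, abs_of_pos h1, div_le_iff₀ h1]
    have he : |Real.exp (-(b*t))| = Real.exp (-(b*t)) := abs_of_pos (Real.exp_pos _)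
    rw [abs_mul, he]
    have hs : |t * Real.sin b + Real.cos b| ≤ t + 1 := by
      calc |t * Real.sin b + Real.cos b| ≤ |t * Real.sin b| + |Real.cos b| := abs_add_le _ _
        _ ≤ t * 1 + 1 := by
            gcongr
            · rw [abs_mul, abs_of_pos ht0]
              exact mul_le_mul_of_nonneg_left (Real.abs_sin_le_one b) ht0.le
            · exact Real.abs_cos_le_one b
        _ = t + 1 := by ring
    have h2 : t + 1 ≤ 2 * (1 + t^2) := by nlinarith
    calc Real.exp (-(b*t)) * |t * Real.sin b + Real.cos b|
        ≤ Real.exp (-(b*t)) * (t+1) := by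
          exact mul_le_mul_of_nonneg_left hs (Real.exp_pos _).le
      _ ≤ Real.exp (-(b*t)) * (2 * (1+t^2)) := by
          exact mul_le_mul_of_nonneg_left h2 (Real.exp_pos _).le
      _ = 2 * Real.exp (-(b*t)) * (1 + t^2) := by ring

lemma fubini {a T : ℝ} (ha : 0 < a) (haT : a ≤ T) :
    ∫ θ in a..T, Real.sin θ / θ = Gaux a - Gaux T := by
  have hprod : Integrable (fun z : ℝ × ℝ => Real.exp (-(z.1*z.2)) * Real.sin z.1)
      ((volume.restrict (Set.Ioc a T)).prod (volume.restrict (Set.Ioi (0:ℝ)))) := by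
    rw [Measure.prod_restrict]
    apply Integrable.mono' (g := fun z : ℝ × ℝ => Real.exp (-(a * z.2)))
    · rw [← Measure.prod_restrict]
      have h1 : Integrable (fun _ : ℝ => (1:ℝ)) (volume.restrict (Set.Ioc a T)) := by
        have : IsFiniteMeasure (volume.restrict (Set.Ioc a T)) :=
          ⟨by rw [Measure.restrict_apply_univ]; exact measure_Ioc_lt_top⟩
        exact integrable_const 1
      have := h1.mul_prod (exp_integrableOn ha)
      simpa using this
    · exact ((Real.continuous_exp.comp ((continuous_fst.mul continuous_snd).neg)).mul
        (Real.continuous_sin.comp continuous_fst)).aestronglyMeasurable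
    · filter_upwards [ae_restrict_mem (measurableSet_Ioc.prod measurableSet_Ioi)] with z hz
      obtain ⟨hz1, hz2⟩ := hz
      rw [Real.norm_eq_abs, abs_mul, abs_of_pos (Real.exp_pos _)]
      calc Real.exp (-(z.1*z.2)) * |Real.sin z.1|
          ≤ Real.exp (-(a*z.2)) * 1 := by
            apply mul_le_mul _ (Real.abs_sin_le_one _) (abs_nonneg _) (Real.exp_pos _).le
            apply Real.exp_le_exp.mpr
            have : a * z.2 ≤ z.1 * z.2 :=
              mul_le_mul_of_nonneg_right hz1.1.le (le_of_lt hz2)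
            linarith
        _ = Real.exp (-(a*z.2)) := mul_one _
  have swap := MeasureTheory.integral_integral_swap
    (f := fun θ t => Real.exp (-(θ*t)) * Real.sin θ) hprod
  have hL : (∫ θ in Set.Ioc a T, ∫ t in Set.Ioi (0:ℝ), Real.exp (-(θ*t)) * Real.sin θ)
      = ∫ θ in Set.Ioc a T, Real.sin θ / θ := by
    apply setIntegral_congr_fun measurableSet_Ioc
    intro θ hθ
    exact inner_t (lt_trans ha hθ.1)
  have hR : (∫ t in Set.Ioi (0:ℝ), ∫ θ in Set.Ioc a T, Real.exp (-(θ*t)) * Real.sin θ)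
      = Gaux a - Gaux T := by
    have hev : ∀ t : ℝ, (∫ θ in Set.Ioc a T, Real.exp (-(θ*t)) * Real.sin θ)
        = Real.exp (-(a*t)) * (t * Real.sin a + Real.cos a) / (1+t^2)
          - Real.exp (-(T*t)) * (t * Real.sin T + Real.cos T) / (1+t^2) := by
      intro t
      rw [← intervalIntegral.integral_of_le haT, interval_eval]
      ring
    rw [MeasureTheory.setIntegral_congr_fun measurableSet_Ioi (fun t _ => hev t)]
    rw [MeasureTheory.integral_sub ((Gaux_integrand_integrable ha))
      ((Gaux_integrand_integrable (lt_of_lt_of_le ha haT)))]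
    rfl
  rw [intervalIntegral.integral_of_le haT, ← hL, swap, hR]

lemma Gaux_abs_le {b : ℝ} (hb : 0 < b) : |Gaux b| ≤ 2 / b := by
  have h1 : |Gaux b| ≤ ∫ t in Set.Ioi (0:ℝ), 2 * Real.exp (-(b*t)) := by
    rw [← Real.norm_eq_abs]
    apply MeasureTheory.norm_integral_le_of_norm_le ((exp_integrableOn hb).const_mul 2)
    filter_upwards [ae_restrict_mem measurableSet_Ioi] with t ht
    have ht0 : (0:ℝ) < t := ht
    have h2 : (0:ℝ) < 1 + t^2 := by positivity
    rw [Real.norm_eq_abs, abs_div, abs_of_pos h2, div_le_iff₀ h2, abs_mul,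
      abs_of_pos (Real.exp_pos _)]
    have hs : |t * Real.sin b + Real.cos b| ≤ t + 1 := by
      calc |t * Real.sin b + Real.cos b| ≤ |t * Real.sin b| + |Real.cos b| := abs_add_le _ _
        _ ≤ t * 1 + 1 := by
            gcongr
            · rw [abs_mul, abs_of_pos ht0]
              exact mul_le_mul_of_nonneg_left (Real.abs_sin_le_one b) ht0.le
            · exact Real.abs_cos_le_one b
        _ = t + 1 := by ring
    have h3 : t + 1 ≤ 2 * (1 + t^2) := by nlinarith
    calc Real.exp (-(b*t)) * |t * Real.sin b + Real.cos b|
        ≤ Real.exp (-(b*t)) * (t+1) :=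
          mul_le_mul_of_nonneg_left hs (Real.exp_pos _).le
      _ ≤ Real.exp (-(b*t)) * (2 * (1+t^2)) :=
          mul_le_mul_of_nonneg_left h3 (Real.exp_pos _).le
      _ = 2 * Real.exp (-(b*t)) * (1 + t^2) := by ring
  rw [MeasureTheory.integral_const_mul, integral_exp_neg_mul hb] at h1
  calc |Gaux b| ≤ 2 * (1/b) := h1
    _ = 2 / b := by ring

lemma Gaux_tendsto_atTop : Tendsto Gaux atTop (𝓝 0) := by
  refine squeeze_zero_norm' (a := fun b : ℝ => 2 / b) ?_ ?_
  · filter_upwards [eventually_gt_atTop (0:ℝ)] with b hb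
    exact Gaux_abs_le hb
  · exact tendsto_const_nhds.div_atTop tendsto_id

lemma Gaux_tendsto_pi_div_two : Tendsto Gaux (𝓝[>] (0:ℝ)) (𝓝 (π/2)) := by
  have hpi : (∫ t in Set.Ioi (0:ℝ), (1+t^2)⁻¹) = π/2 := by
    rw [integral_Ioi_inv_one_add_sq]; simp
  rw [← hpi]
  apply MeasureTheory.tendsto_integral_filter_of_dominated_convergence
    (bound := fun t : ℝ => 2 * (1+t^2)⁻¹)
  · filter_upwards with b
    have h : ∀ t : ℝ, (1:ℝ) + t^2 ≠ 0 := fun t => by positivity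
    apply Continuous.aestronglyMeasurable
    exact (Continuous.mul (by continuity) (by continuity)).div (by continuity) h
  · filter_upwards [self_mem_nhdsWithin] with b (hb : 0 < b)
    filter_upwards [ae_restrict_mem measurableSet_Ioi] with t (ht : 0 < t)
    have h2 : (0:ℝ) < 1 + t^2 := by positivity
    rw [Real.norm_eq_abs, abs_div, abs_of_pos h2, div_le_iff₀ h2, abs_mul,
      abs_of_pos (Real.exp_pos _)]
    have hbt : b * t ≤ Real.exp (b*t) := by
      have := Real.add_one_le_exp (b*t); linarith
    have h3 : Real.exp (-(b*t)) * (t * b) ≤ 1 := by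
      rw [Real.exp_neg]
      rw [inv_mul_le_iff₀ (Real.exp_pos _), mul_one]
      nlinarith [hbt]
    have hs : |t * Real.sin b + Real.cos b| ≤ t * b + 1 := by
      calc |t * Real.sin b + Real.cos b| ≤ |t * Real.sin b| + |Real.cos b| := abs_add_le _ _
        _ ≤ t * b + 1 := by
            gcongr
            · rw [abs_mul, abs_of_pos ht]
              have : |Real.sin b| ≤ b := by
                calc |Real.sin b| ≤ |b| := Real.abs_sin_le_abs
                  _ = b := abs_of_pos hb
              exact mul_le_mul_of_nonneg_left this ht.le
            · exact Real.abs_cos_le_one b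
    have he1 : Real.exp (-(b*t)) ≤ 1 := by
      rw [Real.exp_le_one_iff]
      nlinarith [mul_pos hb ht]
    calc Real.exp (-(b*t)) * |t * Real.sin b + Real.cos b|
        ≤ Real.exp (-(b*t)) * (t * b + 1) :=
          mul_le_mul_of_nonneg_left hs (Real.exp_pos _).le
      _ = Real.exp (-(b*t)) * (t * b) + Real.exp (-(b*t)) := by ring
      _ ≤ 1 + 1 := add_le_add h3 he1
      _ = 2 * (1+t^2)⁻¹ * (1+t^2) := by rw [mul_assoc, inv_mul_cancel₀ h2.ne']; norm_num
  · exact (integrable_inv_one_add_sq.integrableOn).const_mul 2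
  · filter_upwards [ae_restrict_mem measurableSet_Ioi] with t (ht : 0 < t)
    have hc : ContinuousAt
        (fun b : ℝ => Real.exp (-(b*t)) * (t * Real.sin b + Real.cos b) / (1+t^2)) 0 := by
      have h : (1:ℝ) + t^2 ≠ 0 := by positivity
      apply ContinuousAt.div _ continuousAt_const h
      exact ContinuousAt.mul (by fun_prop) (by fun_prop)
    have := hc.tendsto.mono_left (nhdsWithin_le_nhds (s := Set.Ioi (0:ℝ)))
    simpa using this

lemma Si_tendsto_zero : Tendsto Siaux (𝓝[>] (0:ℝ)) (𝓝 0) := by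
  refine squeeze_zero_norm' (a := fun x : ℝ => |x|) ?_ ?_
  · filter_upwards with x
    exact Si_abs_le x
  · have : Tendsto (fun x : ℝ => |x|) (𝓝 0) (𝓝 |0|) := (continuous_abs.tendsto 0)
    simpa using this.mono_left nhdsWithin_le_nhds

lemma key_const {b : ℝ} (hb : 0 < b) : Gaux b + Siaux b = π / 2 := by
  have hconst : ∀ c : ℝ, 0 < c → Gaux c + Siaux c = Gaux b + Siaux b := by
    have key : ∀ u v : ℝ, 0 < u → u ≤ v → Gaux u + Siaux u = Gaux v + Siaux v := by
      intro u v hu huv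
      have h1 := fubini hu huv
      have h2 := intervalIntegral.integral_add_adjacent_intervals
        (sinc_intervalIntegrable 0 u) (sinc_intervalIntegrable u v)
      have h2' : Siaux u + ∫ θ in u..v, Real.sin θ / θ = Siaux v := h2
      rw [h1] at h2'
      linarith
    intro c hc
    rcases le_total c b with h | h
    · exact key c b hc h
    · exact (key b c hb h).symm
  have h1 : Tendsto (fun c => Gaux c + Siaux c) (𝓝[>] (0:ℝ)) (𝓝 (π/2 + 0)) :=
    Gaux_tendsto_pi_div_two.add Si_tendsto_zero
  have h2 : Tendsto (fun c => Gaux c + Siaux c) (𝓝[>] (0:ℝ)) (𝓝 (Gaux b + Siaux b)) := by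
    apply Tendsto.congr' _ tendsto_const_nhds
    filter_upwards [self_mem_nhdsWithin] with c (hc : 0 < c)
    exact (hconst c hc).symm
  have := tendsto_nhds_unique h2 h1
  simpa using this

lemma cos_integrableOn {ε : ℝ} (hε : 0 < ε) (y : ℝ) :
    IntegrableOn (fun θ : ℝ => Real.cos (θ * y) / θ ^ 2) (Set.Ioi ε) := by
  have hrp : IntegrableOn (fun x : ℝ => x ^ (-2 : ℝ)) (Set.Ioi ε) :=
    integrableOn_Ioi_rpow_of_lt (by norm_num) hε
  apply Integrable.mono' hrp
  · exact ((Real.measurable_cos.comp (measurable_id.mul_const y)).div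
      (measurable_id.pow_const 2)).aestronglyMeasurable
  · filter_upwards [ae_restrict_mem measurableSet_Ioi] with θ (hθ : ε < θ)
    have hθ0 : 0 < θ := lt_trans hε hθ
    rw [Real.rpow_neg hθ0.le, Real.rpow_two, Real.norm_eq_abs, abs_div,
      abs_of_pos (pow_pos hθ0 2), inv_eq_one_div]
    exact div_le_div₀ (by norm_num) (Real.abs_cos_le_one _) (pow_pos hθ0 2) le_rfl

lemma main_pos {ε y : ℝ} (hε : 0 < ε) (hy : 0 < y) :
    ∫ θ in Set.Ioi ε, Real.cos (θ * y) / θ ^ 2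
      = Real.cos (ε*y)/ε - y*(π/2 - Siaux (ε*y)) := by
  have hεy : 0 < ε * y := mul_pos hε hy
  have hstep : ∀ T : ℝ, ε ≤ T →
      ∫ θ in ε..T, Real.cos (θ * y) / θ ^ 2
        = Real.cos (ε*y)/ε - Real.cos (T*y)/T - y * (Gaux (ε*y) - Gaux (T*y)) := by
    intro T hT
    have hpos : ∀ θ ∈ Set.uIcc ε T, (0:ℝ) < θ := by
      intro θ hθ
      rcases Set.mem_uIcc.mp hθ with ⟨h1, _⟩ | ⟨h1, _⟩
      · linarith
      · linarith
    have hcont1 : ContinuousOn (fun θ : ℝ => y * Real.sin (θ*y) / θ) (Set.uIcc ε T) := by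
      apply ContinuousOn.div (by fun_prop) continuousOn_id
      intro θ hθ; exact (hpos θ hθ).ne'
    have hcont2 : ContinuousOn (fun θ : ℝ => Real.cos (θ*y) / θ^2) (Set.uIcc ε T) := by
      apply ContinuousOn.div (by fun_prop) (by fun_prop)
      intro θ hθ; exact pow_ne_zero 2 (hpos θ hθ).ne'
    have hder : ∀ θ ∈ Set.uIcc ε T,
        HasDerivAt (fun θ : ℝ => -Real.cos (θ*y) / θ)
          (y * Real.sin (θ*y) / θ + Real.cos (θ*y) / θ^2) θ := by
      intro θ hθ
      have hθ0 : θ ≠ 0 := (hpos θ hθ).ne'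
      have h1 : HasDerivAt (fun θ : ℝ => -Real.cos (θ*y)) (Real.sin (θ*y) * y) θ := by
        have := (Real.hasDerivAt_cos (θ*y)).comp θ ((hasDerivAt_id θ).mul_const y)
        simpa using this.fun_neg
      have h2 : HasDerivAt (fun θ : ℝ => θ) 1 θ := hasDerivAt_id θ
      have := h1.div h2 hθ0
      refine this.congr_deriv ?_
      field_simp
      ring
    have hFTC := intervalIntegral.integral_eq_sub_of_hasDerivAt hder
      ((hcont1.add hcont2).intervalIntegrable)
    rw [intervalIntegral.integral_add (hcont1.intervalIntegrable)
      (hcont2.intervalIntegrable)] at hFTC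
    have hsin : ∫ θ in ε..T, y * Real.sin (θ*y) / θ = y * (Gaux (ε*y) - Gaux (T*y)) := by
      have hsub : ∫ θ in ε..T, y * Real.sin (θ*y) / θ
          = y * y * ∫ θ in ε..T, (fun s => Real.sin s / s) (θ * y) := by
        rw [← intervalIntegral.integral_const_mul]
        apply intervalIntegral.integral_congr
        intro θ hθ
        have hθ0 : θ ≠ 0 := (hpos θ hθ).ne'
        show y * Real.sin (θ*y) / θ = y * y * (Real.sin (θ*y) / (θ*y))
        field_simp
      rw [hsub, intervalIntegral.integral_comp_mul_right (fun s => Real.sin s / s) hy.ne',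
        smul_eq_mul, fubini hεy (by nlinarith : ε * y ≤ T * y)]
      field_simp
    rw [hsin] at hFTC
    have : ∫ θ in ε..T, Real.cos (θ*y) / θ^2
        = (-Real.cos (T*y)/T - (-Real.cos (ε*y)/ε)) - y * (Gaux (ε*y) - Gaux (T*y)) := by
      linarith [hFTC]
    rw [this]; ring
  have t1 : Tendsto (fun T => ∫ θ in ε..T, Real.cos (θ * y) / θ ^ 2) atTop
      (𝓝 (∫ θ in Set.Ioi ε, Real.cos (θ * y) / θ ^ 2)) :=
    intervalIntegral_tendsto_integral_Ioi ε (cos_integrableOn hε y) tendsto_id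
  have t2 : Tendsto
      (fun T => Real.cos (ε*y)/ε - Real.cos (T*y)/T - y * (Gaux (ε*y) - Gaux (T*y)))
      atTop (𝓝 (Real.cos (ε*y)/ε - 0 - y * (Gaux (ε*y) - 0))) := by
    apply Tendsto.sub
    apply Tendsto.sub tendsto_const_nhds
    · refine squeeze_zero_norm' (a := fun T : ℝ => 1 / T) ?_ ?_
      · filter_upwards [eventually_gt_atTop (0:ℝ)] with T hT
        rw [Real.norm_eq_abs, abs_div, abs_of_pos hT]
        exact div_le_div₀ (by norm_num) (Real.abs_cos_le_one _) hT le_rfl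
      · exact tendsto_const_nhds.div_atTop tendsto_id
    · exact (tendsto_const_nhds.sub
        (Gaux_tendsto_atTop.comp (tendsto_id.atTop_mul_const hy))).const_mul y
  have heq : (fun T => ∫ θ in ε..T, Real.cos (θ * y) / θ ^ 2) =ᶠ[atTop]
      (fun T => Real.cos (ε*y)/ε - Real.cos (T*y)/T - y * (Gaux (ε*y) - Gaux (T*y))) := by
    filter_upwards [eventually_ge_atTop ε] with T hT
    exact hstep T hT
  have := tendsto_nhds_unique (t1.congr' heq) t2
  rw [this]
  have hG : Gaux (ε*y) = π/2 - Siaux (ε*y) := by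
    have := key_const hεy; linarith
  rw [hG]; ring

lemma Siaux_neg (u : ℝ) : Siaux (-u) = -Siaux u := by
  have h1 : (∫ x in (0:ℝ)..u, Real.sin (-x) / (-x)) = ∫ x in (-u)..(-(0:ℝ)), Real.sin x / x :=
    intervalIntegral.integral_comp_neg (fun s => Real.sin s / s)
  have h2 : (∫ x in (0:ℝ)..u, Real.sin (-x) / (-x)) = Siaux u := by
    apply intervalIntegral.integral_congr
    intro x _
    show Real.sin (-x) / (-x) = Real.sin x / x
    rcases eq_or_ne x 0 with rfl | hx
    · simp
    · rw [Real.sin_neg, neg_div_neg_eq]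
  have h3 : (∫ x in (-u)..(0:ℝ), Real.sin x / x) = -Siaux (-u) := by
    rw [intervalIntegral.integral_symm]; rfl
  rw [h2, neg_zero, h3] at h1
  linarith

lemma integral_y_zero {ε : ℝ} (hε : 0 < ε) :
    ∫ θ in Set.Ioi ε, Real.cos (θ * 0) / θ ^ 2 = 1/ε := by
  have hder : ∀ x ∈ Set.Ici ε,
      HasDerivAt (fun θ : ℝ => -θ⁻¹) (Real.cos (x * 0) / x ^ 2) x := by
    intro x hx
    have hx0 : x ≠ 0 := (lt_of_lt_of_le hε hx.out).ne'
    have := (hasDerivAt_inv hx0).fun_neg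
    refine this.congr_deriv ?_
    rw [mul_zero, Real.cos_zero]
    field_simp
  have htend : Tendsto (fun θ : ℝ => -θ⁻¹) atTop (𝓝 0) := by
    simpa using (tendsto_inv_atTop_zero (𝕜 := ℝ)).neg
  have := MeasureTheory.integral_Ioi_of_hasDerivAt_of_tendsto' hder
    (cos_integrableOn hε 0) htend
  rw [this]
  field_simp
  ring

end Stmt19Aux
end Stmt19Helpers

/-- explicit evaluation of the high-pass part of ReLU and the bound on the
low-frequency remainder. `Si(u) = ∫_0^u sin(s)/s ds`. -/



theorem stmt19 (ε : ℝ) (hε : 0 < ε) (y : ℝ) :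
    (-(1 / Real.pi) * ∫ θ in Set.Ioi ε, Real.cos (θ * y) / θ ^ 2
        = |y| / 2 - Real.cos (ε * y) / (Real.pi * ε)
          - (y / Real.pi) * ∫ s in (0 : ℝ)..(ε * y), Real.sin s / s) ∧
    |max y 0 - (-(1 / Real.pi) * ∫ θ in Set.Ioi ε, Real.cos (θ * y) / θ ^ 2)
        - y / 2 - 1 / (Real.pi * ε)|
      ≤ 3 / (2 * Real.pi) * ε * y ^ 2 := by
  have hπ : (0:ℝ) < Real.pi := Real.pi_pos
  have hπ0 : (Real.pi:ℝ) ≠ 0 := hπ.ne'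
  have hε0 : ε ≠ 0 := hε.ne'
  have hpart1 : -(1 / Real.pi) * ∫ θ in Set.Ioi ε, Real.cos (θ * y) / θ ^ 2
        = |y| / 2 - Real.cos (ε * y) / (Real.pi * ε) - (y / Real.pi) * Stmt19Aux.Siaux (ε * y) := by
    rcases lt_trichotomy y 0 with hy | rfl | hy
    · have hz : 0 < -y := neg_pos.mpr hy
      have hmain := Stmt19Aux.main_pos hε hz
      have hIeq : (∫ θ in Set.Ioi ε, Real.cos (θ * y) / θ ^ 2)
          = ∫ θ in Set.Ioi ε, Real.cos (θ * (-y)) / θ ^ 2 := by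
        apply setIntegral_congr_fun measurableSet_Ioi
        intro θ _
        show Real.cos (θ * y) / θ ^ 2 = Real.cos (θ * (-y)) / θ ^ 2
        rw [mul_neg, Real.cos_neg]
      have hSi : Stmt19Aux.Siaux (ε * y) = - Stmt19Aux.Siaux (ε * (-y)) := by
        rw [show ε * y = -(ε * (-y)) by ring, Stmt19Aux.Siaux_neg]
      have hcos : Real.cos (ε * y) = Real.cos (ε * (-y)) := by
        rw [mul_neg, Real.cos_neg]
      rw [hIeq, hmain, abs_of_neg hy, hSi, hcos]
      field_simp
      ring
    · rw [Stmt19Aux.integral_y_zero hε]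
      have : Stmt19Aux.Siaux (ε * 0) = 0 := by simp [Stmt19Aux.Siaux]
      rw [this]
      simp
      ring
    · have hmain := Stmt19Aux.main_pos hε hy
      rw [hmain, abs_of_pos hy]
      field_simp
      ring
  refine ⟨hpart1, ?_⟩
  have hrw : max y 0 - (-(1 / Real.pi) * ∫ θ in Set.Ioi ε, Real.cos (θ * y) / θ ^ 2)
        - y / 2 - 1 / (Real.pi * ε)
      = (Real.cos (ε*y) - 1) / (Real.pi * ε) + (y / Real.pi) * Stmt19Aux.Siaux (ε*y) := by
    rw [hpart1]
    have hmax : max y 0 = (y + |y|) / 2 := by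
      rcases le_total y 0 with h | h
      · rw [max_eq_right h, abs_of_nonpos h]; ring
      · rw [max_eq_left h, _root_.abs_of_nonneg h]; ring
    rw [hmax]
    field_simp
    ring
  rw [hrw]
  have hS_le : |Stmt19Aux.Siaux (ε*y)| ≤ ε * |y| := by
    calc |Stmt19Aux.Siaux (ε*y)| ≤ |ε*y| := Stmt19Aux.Si_abs_le _
      _ = ε * |y| := by rw [abs_mul, abs_of_pos hε]
  have hcos : |Real.cos (ε*y) - 1| ≤ (ε*y)^2/2 := by
    rw [abs_sub_comm, _root_.abs_of_nonneg (by linarith [Real.cos_le_one (ε*y)])]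
    have := Real.one_sub_sq_div_two_le_cos (x := ε*y)
    linarith
  have habs2 : |y| * |y| = y^2 := by rw [← abs_mul, abs_mul_self]; ring
  calc |(Real.cos (ε*y) - 1) / (Real.pi * ε) + (y / Real.pi) * Stmt19Aux.Siaux (ε*y)|
      ≤ |(Real.cos (ε*y) - 1) / (Real.pi * ε)| + |(y / Real.pi) * Stmt19Aux.Siaux (ε*y)| := abs_add_le _ _
    _ = |Real.cos (ε*y) - 1| / (Real.pi * ε) + (|y| / Real.pi) * |Stmt19Aux.Siaux (ε*y)| := by
        rw [abs_div, abs_of_pos (mul_pos hπ hε), abs_mul, abs_div, abs_of_pos hπ]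
    _ ≤ ((ε*y)^2/2) / (Real.pi * ε) + (|y| / Real.pi) * (ε * |y|) := by
        gcongr
    _ = ε*y^2/(2*Real.pi) + ε*y^2/Real.pi := by
        rw [show |y| / Real.pi * (ε * |y|) = ε * (|y| * |y|) / Real.pi by ring, habs2, mul_pow]
        field_simp
    _ = 3 / (2 * Real.pi) * ε * y ^ 2 := by
        field_simp
        ring


end
end
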